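/- arXiv:1511.03162 — 7 statements merged into one kernel-verified Lean document; each statement's English description precedes it below -/
import Mathlib

section
/- Let V be a 5-dimensional vector space over a field K, μ ∈ Λ²V, and α ∈ Λ⁴V. Then μ(μ^□, α) = 0, where μ(·,·) is the contraction into (Λ⁵V)^⊗2 and □ is the quadratic wedge-square map. -/
open ExteriorAlgebra TensorProduct

namespace Stmt5Aux

open Finset

variable {K : Type*} [Field K] {V : Type*} [AddCommGroup V] [Module K V]

/-- Left contraction on the exterior algebra, inherited from the Clifford algebra with
zero quadratic form. -/
noncomputable def ctr (d : Module.Dual K V) : ExteriorAlgebra K V →ₗ[K] ExteriorAlgebra K V :=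
  CliffordAlgebra.contractLeft (Q := (0 : QuadraticForm K V)) d

lemma ctr_ι_mul (d : Module.Dual K V) (a : V) (x : ExteriorAlgebra K V) :
    ctr d (ι K a * x) = d a • x - ι K a * ctr d x :=
  CliffordAlgebra.contractLeft_ι_mul d a x

lemma ctr_one (d : Module.Dual K V) : ctr d (1 : ExteriorAlgebra K V) = 0 :=
  CliffordAlgebra.contractLeft_one 0 d

lemma six_zero (hdim : Module.finrank K V = 5) (u : Fin 6 → V) : ιMulti K 6 u = 0 := by
  haveI : Module.Finite K V := Module.finite_of_finrank_eq_succ hdim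
  refine AlternatingMap.map_linearDependent _ _ (fun h => ?_)
  have := h.fintype_card_le_finrank
  simp [hdim] at this

lemma prod5 (a b c d e : V) :
    ι K a * ι K b * ι K c * ι K d * ι K e = ιMulti K 5 ![a,b,c,d,e] := by
  simp [ιMulti_apply, mul_assoc]

lemma prod4 (a b c d : V) :
    ι K a * ι K b * ι K c * ι K d = ιMulti K 4 ![a,b,c,d] := by
  simp [ιMulti_apply, mul_assoc]

lemma perm_rot (p q r s t : V) : ιMulti K 5 ![q,r,s,t,p] = ιMulti K 5 ![p,q,r,s,t] := by
  have h : ![q,r,s,t,p] = ![p,q,r,s,t] ∘ (finRotate 5) := by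
    funext i; fin_cases i <;> rfl
  have hs : Equiv.Perm.sign (finRotate 5) = 1 := by decide
  rw [h, AlternatingMap.map_perm, hs, one_smul]

lemma perm3 (p q r s t : V) : ιMulti K 5 ![p,q,s,t,r] = ιMulti K 5 ![p,q,r,s,t] := by
  have h : ![p,q,s,t,r] = ![p,q,r,s,t] ∘ (Equiv.swap (2:Fin 5) 3 * Equiv.swap (3:Fin 5) 4) := by
    funext i
    fin_cases i <;> simp [Equiv.Perm.mul_apply, Equiv.swap_apply_def]
  have hs : Equiv.Perm.sign (Equiv.swap (2:Fin 5) 3 * Equiv.swap (3:Fin 5) 4) = 1 := by decide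
  rw [h, AlternatingMap.map_perm, hs, one_smul]

lemma perm5pair (a b c d e : V) : ιMulti K 5 ![c,d,a,b,e] = ιMulti K 5 ![a,b,c,d,e] := by
  have h : ![c,d,a,b,e] = ![a,b,c,d,e] ∘ (Equiv.swap (0:Fin 5) 2 * Equiv.swap (1:Fin 5) 3) := by
    funext i
    fin_cases i <;> simp [Equiv.Perm.mul_apply, Equiv.swap_apply_def]
  have hs : Equiv.Perm.sign (Equiv.swap (0:Fin 5) 2 * Equiv.swap (1:Fin 5) 3) = 1 := by decide
  rw [h, AlternatingMap.map_perm, hs, one_smul]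

lemma perm4pair (a b c d : V) : ιMulti K 4 ![c,d,a,b] = ιMulti K 4 ![a,b,c,d] := by
  have h : ![c,d,a,b] = ![a,b,c,d] ∘ (Equiv.swap (0:Fin 4) 2 * Equiv.swap (1:Fin 4) 3) := by
    funext i
    fin_cases i <;> simp [Equiv.Perm.mul_apply, Equiv.swap_apply_def]
  have hs : Equiv.Perm.sign (Equiv.swap (0:Fin 4) 2 * Equiv.swap (1:Fin 4) 3) = 1 := by decide
  rw [h, AlternatingMap.map_perm, hs, one_smul]

lemma hd6 (hdim : Module.finrank K V = 5) (d : Module.Dual K V) (a b c e f g : V) :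
    d a • ιMulti K 5 ![b,c,e,f,g] - d b • ιMulti K 5 ![a,c,e,f,g]
      + d c • ιMulti K 5 ![a,b,e,f,g] - d e • ιMulti K 5 ![a,b,c,f,g]
      + d f • ιMulti K 5 ![a,b,c,e,g] - d g • ιMulti K 5 ![a,b,c,e,f] = 0 := by
  have h0 := six_zero hdim ![a,b,c,e,f,g]
  rw [ιMulti_apply] at h0
  have h1 := congrArg (ctr d) h0
  rw [map_zero] at h1
  simp only [List.ofFn_succ, List.prod_cons, Matrix.cons_val_zero, Matrix.cons_val_succ,
    List.ofFn_zero, List.prod_nil, Fin.succ_zero_eq_one] at h1 ⊢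
  simp only [ctr_ι_mul, ctr_one, mul_zero, sub_zero, mul_sub, smul_sub, mul_smul_comm,
    ιMulti_apply] at h1 ⊢
  rw [← h1]
  abel

lemma tensor6 (hdim : Module.finrank K V = 5) (α : ExteriorAlgebra K V) (a b c e f g : V) :
    ιMulti K 5 ![b,c,e,f,g] ⊗ₜ[K] (α * ι K a) - ιMulti K 5 ![a,c,e,f,g] ⊗ₜ[K] (α * ι K b)
      + ιMulti K 5 ![a,b,e,f,g] ⊗ₜ[K] (α * ι K c) - ιMulti K 5 ![a,b,c,f,g] ⊗ₜ[K] (α * ι K e)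
      + ιMulti K 5 ![a,b,c,e,g] ⊗ₜ[K] (α * ι K f) - ιMulti K 5 ![a,b,c,e,f] ⊗ₜ[K] (α * ι K g)
      = (0 : ExteriorAlgebra K V ⊗[K] ExteriorAlgebra K V) := by
  haveI : Module.Finite K V := Module.finite_of_finrank_eq_succ hdim
  set b5 := Module.finBasisOfFinrankEq K V hdim with hb5
  have hx : ∀ x : V, α * ι K x = ∑ i, b5.repr x i • (α * ι K (b5 i)) := by
    intro x
    conv_lhs => rw [← b5.sum_repr x]
    simp only [map_sum, map_smul, Finset.mul_sum, mul_smul_comm]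
  rw [hx a, hx b, hx c, hx e, hx f, hx g]
  simp only [tmul_sum, tmul_smul, smul_tmul']
  simp only [← Finset.sum_sub_distrib, ← Finset.sum_add_distrib]
  refine Finset.sum_eq_zero fun i _ => ?_
  rw [← sub_tmul, ← add_tmul, ← sub_tmul, ← add_tmul, ← sub_tmul]
  have := hd6 hdim (b5.coord i) a b c e f g
  simp only [Module.Basis.coord_apply] at this
  rw [this, zero_tmul]

/-- The key Plücker-type relation: for any six vectors and any `α`. -/
lemma triple (hdim : Module.finrank K V = 5) (α : ExteriorAlgebra K V)
    (va wa vb wb vc wc : V) :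
    (ιMulti K 5 ![vb,wb,vc,wc,va] ⊗ₜ[K] (α * ι K wa)
        - ιMulti K 5 ![vb,wb,vc,wc,wa] ⊗ₜ[K] (α * ι K va))
      + (ιMulti K 5 ![va,wa,vc,wc,vb] ⊗ₜ[K] (α * ι K wb)
        - ιMulti K 5 ![va,wa,vc,wc,wb] ⊗ₜ[K] (α * ι K vb))
      + (ιMulti K 5 ![va,wa,vb,wb,vc] ⊗ₜ[K] (α * ι K wc)
        - ιMulti K 5 ![va,wa,vb,wb,wc] ⊗ₜ[K] (α * ι K vc)) = 0 := by
  have h := tensor6 hdim α va wa vb wb vc wc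
  rw [show ιMulti K 5 ![wa,vb,wb,vc,wc] = ιMulti K 5 ![vb,wb,vc,wc,wa] from (perm_rot _ _ _ _ _).symm,
    show ιMulti K 5 ![va,vb,wb,vc,wc] = ιMulti K 5 ![vb,wb,vc,wc,va] from (perm_rot _ _ _ _ _).symm,
    show ιMulti K 5 ![va,wa,wb,vc,wc] = ιMulti K 5 ![va,wa,vc,wc,wb] from (perm3 _ _ _ _ _).symm,
    show ιMulti K 5 ![va,wa,vb,vc,wc] = ιMulti K 5 ![va,wa,vc,wc,vb] from (perm3 _ _ _ _ _).symm]
    at h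
  rw [← neg_eq_zero, ← h]
  abel

lemma pair_comm {M : Type*} [AddCommGroup M] {n : ℕ} (F : Fin n → Fin n → M) :
    ∑ j, ∑ i ∈ Iio j, F i j = ∑ i, ∑ j ∈ Ioi i, F i j := by
  rw [Finset.sum_sigma', Finset.sum_sigma']
  exact Finset.sum_nbij' (fun p => ⟨p.2, p.1⟩) (fun p => ⟨p.2, p.1⟩)
    (by simp) (by simp) (by simp) (by simp) (by simp)

lemma pair_comm2 {M : Type*} [AddCommGroup M] {n : ℕ} (j : Fin n) (F : Fin n → Fin n → M) :
    ∑ k ∈ Ioi j, ∑ i ∈ Ioo j k, F i k = ∑ i ∈ Ioi j, ∑ k ∈ Ioi i, F i k := by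
  rw [Finset.sum_sigma', Finset.sum_sigma']
  refine Finset.sum_nbij' (fun p => ⟨p.2, p.1⟩) (fun p => ⟨p.2, p.1⟩)
    ?_ ?_ (by simp) (by simp) (by simp)
  · rintro ⟨k, i⟩ h; simp only [mem_sigma, mem_Ioi, mem_Ioo] at h ⊢; omega
  · rintro ⟨i, k⟩ h; simp only [mem_sigma, mem_Ioi, mem_Ioo] at h ⊢
    exact ⟨h.1.trans h.2, h.1, h.2⟩

lemma comb {M : Type*} [AddCommGroup M] {n : ℕ} (T : Fin n → Fin n → Fin n → M)
    (F1 : ∀ j k i, i = j ∨ i = k → T j k i = 0)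
    (F2 : ∀ j k i, T j k i = T k j i)
    (F3 : ∀ i j k, T j k i + T i k j + T j i k = 0) :
    ∑ i, ∑ j, ∑ k ∈ Ioi j, T j k i = 0 := by
  rw [Finset.sum_comm]
  have swap_in : ∀ j : Fin n, ∑ i, ∑ k ∈ Ioi j, T j k i = ∑ k ∈ Ioi j, ∑ i, T j k i :=
    fun j => Finset.sum_comm
  rw [Finset.sum_congr rfl (fun j _ => swap_in j)]
  have hpart : ∀ j : Fin n, ∀ k ∈ Ioi j, ∑ i, T j k i =
      ((∑ i ∈ Iio j, T j k i) + ∑ i ∈ Ioo j k, T j k i) + ∑ i ∈ Ioi k, T j k i := by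
    intro j k hk
    rw [mem_Ioi] at hk
    have d1 : Disjoint (Iio j) (Ioo j k) := by
      rw [Finset.disjoint_left]; intro a ha hb
      simp only [mem_Iio, mem_Ioo] at ha hb; omega
    have d2 : Disjoint (Iio j ∪ Ioo j k) (Ioi k) := by
      rw [Finset.disjoint_left]; intro a ha hb
      simp only [mem_union, mem_Iio, mem_Ioo, mem_Ioi] at ha hb; omega
    rw [← Finset.sum_union d1, ← Finset.sum_union d2]
    refine (Finset.sum_subset (Finset.subset_univ _) fun i _ hi => ?_).symm
    simp only [mem_union, mem_Iio, mem_Ioo, mem_Ioi] at hi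
    exact F1 j k i (by omega)
  rw [Finset.sum_congr rfl (fun j _ => Finset.sum_congr rfl (hpart j))]
  simp only [Finset.sum_add_distrib]
  have hS1 : ∑ j, ∑ k ∈ Ioi j, ∑ i ∈ Iio j, T j k i
      = ∑ x, ∑ y ∈ Ioi x, ∑ z ∈ Ioi y, T y z x := by
    have e1 : ∀ j : Fin n, ∑ k ∈ Ioi j, ∑ i ∈ Iio j, T j k i
        = ∑ i ∈ Iio j, ∑ k ∈ Ioi j, T j k i := fun j => Finset.sum_comm
    rw [Finset.sum_congr rfl (fun j _ => e1 j)]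
    exact pair_comm (fun i j => ∑ k ∈ Ioi j, T j k i)
  have hS2 : ∑ j, ∑ k ∈ Ioi j, ∑ i ∈ Ioo j k, T j k i
      = ∑ x, ∑ y ∈ Ioi x, ∑ z ∈ Ioi y, T x z y := by
    exact Finset.sum_congr rfl (fun j _ => pair_comm2 j (fun i k => T j k i))
  rw [hS1, hS2]
  simp only [← Finset.sum_add_distrib]
  refine Finset.sum_eq_zero fun x _ => Finset.sum_eq_zero fun y _ =>
    Finset.sum_eq_zero fun z _ => ?_
  have := F3 x y z
  rw [F2 y x z] at this
  abel_nf
  abel_nf at this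
  linear_combination (norm := abel) this

lemma exists_rep {μ : ExteriorAlgebra K V}
    (hμ : μ ∈ (LinearMap.range (ι K : V →ₗ[K] ExteriorAlgebra K V)) ^ 2) :
    ∃ n, ∃ v w : Fin n → V, μ = ∑ i, ι K (v i) * ι K (w i) := by
  rw [pow_two] at hμ
  refine Submodule.mul_induction_on hμ ?_ ?_
  · rintro x ⟨a, rfl⟩ y ⟨b, rfl⟩
    exact ⟨1, fun _ => a, fun _ => b, by simp⟩
  · rintro x y ⟨n1, v1, w1, rfl⟩ ⟨n2, v2, w2, rfl⟩
    refine ⟨n1 + n2, Fin.append v1 v2, Fin.append w1 w2, ?_⟩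
    rw [Fin.sum_univ_add]
    simp [Fin.append_left, Fin.append_right]

end Stmt5Aux

open Stmt5Aux in
/-- For a 5-dimensional vector space `V` over `K`, `μ ∈ Λ²V` and
`α ∈ Λ⁴V`, one has `μ(μ^□, α) = 0`, where `μ(·,·)` is the contraction into
`(Λ⁵V)^⊗2` and `□` is the quadratic wedge-square map. -/
theorem stmt_5 (K : Type*) [Field K] (V : Type*) [AddCommGroup V] [Module K V]
    (hdim : Module.finrank K V = 5)
    (sq : ExteriorAlgebra K V → ExteriorAlgebra K V)
    (hsq : ∀ (n : ℕ) (v w : Fin n → V),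
      sq (∑ i, ι K (v i) * ι K (w i))
        = ∑ i, ∑ j ∈ Finset.Ioi i, ι K (v i) * ι K (w i) * ι K (v j) * ι K (w j))
    (C : ExteriorAlgebra K V → ExteriorAlgebra K V → ExteriorAlgebra K V →
      ExteriorAlgebra K V ⊗[K] ExteriorAlgebra K V)
    (hC : ∀ (n : ℕ) (v w : Fin n → V) (α β : ExteriorAlgebra K V),
      C (∑ i, ι K (v i) * ι K (w i)) α β
        = ∑ i, ((α * ι K (v i)) ⊗ₜ[K] (β * ι K (w i))
            - (α * ι K (w i)) ⊗ₜ[K] (β * ι K (v i))))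
    (μ α : ExteriorAlgebra K V)
    (hμ : μ ∈ (LinearMap.range (ι K : V →ₗ[K] ExteriorAlgebra K V)) ^ 2)
    (hα : α ∈ (LinearMap.range (ι K : V →ₗ[K] ExteriorAlgebra K V)) ^ 4) :
    C μ (sq μ) α = 0 := by
  obtain ⟨n, v, w, hrep⟩ := exists_rep hμ
  rw [hrep, hsq n v w, hC n v w]
  simp only [Finset.sum_mul, TensorProduct.sum_tmul]
  simp only [← Finset.sum_sub_distrib]
  refine comb (fun j k i =>
      (ι K (v j) * ι K (w j) * ι K (v k) * ι K (w k) * ι K (v i)) ⊗ₜ[K] (α * ι K (w i))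
        - (ι K (v j) * ι K (w j) * ι K (v k) * ι K (w k) * ι K (w i)) ⊗ₜ[K] (α * ι K (v i)))
    ?_ ?_ ?_
  · rintro j k i (rfl | rfl)
    · rw [prod5, prod5,
        AlternatingMap.map_eq_zero_of_eq _ ![v i, w i, v k, w k, v i] (i := 0) (j := 4)
          rfl (by decide),
        AlternatingMap.map_eq_zero_of_eq _ ![v i, w i, v k, w k, w i] (i := 1) (j := 4)
          rfl (by decide), zero_tmul, zero_tmul, sub_zero]
    · rw [prod5, prod5,
        AlternatingMap.map_eq_zero_of_eq _ ![v j, w j, v i, w i, v i] (i := 2) (j := 4)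
          rfl (by decide),
        AlternatingMap.map_eq_zero_of_eq _ ![v j, w j, v i, w i, w i] (i := 3) (j := 4)
          rfl (by decide), zero_tmul, zero_tmul, sub_zero]
  · intro j k i
    rw [prod5, prod5, prod5, prod5,
      show ιMulti K 5 ![v k, w k, v j, w j, v i] = ιMulti K 5 ![v j, w j, v k, w k, v i] from
        perm5pair _ _ _ _ _,
      show ιMulti K 5 ![v k, w k, v j, w j, w i] = ιMulti K 5 ![v j, w j, v k, w k, w i] from
        perm5pair _ _ _ _ _]
  · intro i j k
    rw [prod5, prod5, prod5, prod5, prod5, prod5,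
      show ιMulti K 5 ![v j, w j, v i, w i, v k] = ιMulti K 5 ![v i, w i, v j, w j, v k] from
        perm5pair _ _ _ _ _,
      show ιMulti K 5 ![v j, w j, v i, w i, w k] = ιMulti K 5 ![v i, w i, v j, w j, w k] from
        perm5pair _ _ _ _ _]
    exact triple hdim α (v i) (w i) (v j) (w j) (v k) (w k)
end

section
/- Let V be a 5-dimensional vector space over a field K and μ, ν, ξ ∈ Λ²V. Then ν(μ^□, μ ∧ ξ) = −ξ(μ^□, μ ∧ ν), where μ(·,·) denotes the contraction of Λ²V against two elements of Λ⁴V landing in (Λ⁵V)^⊗2, and □ is the quadratic wedge-square map Λ²V → Λ⁴V. -/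
set_option maxHeartbeats 2000000
open ExteriorAlgebra TensorProduct

section Comb
variable {M : Type*} [AddCommGroup M] {α : Type*} [LinearOrder α]

lemma ptwise (F : α → α → α → M)
    (hd1 : ∀ u v, F u v u = 0) (hd2 : ∀ u v, F u v v = 0) (u v w : α) :
    (if u < v then F u v w else 0)
      = ((if u < v ∧ v < w then F u v w else 0)
        + (if u < w ∧ w < v then F u v w else 0))
        + (if w < u ∧ u < v then F u v w else 0) := by
  rcases lt_trichotomy u v with huv | rfl | hvu
  · rcases lt_trichotomy v w with hvw | rfl | hwv
    · have h2 : ¬ w < v := lt_asymm hvw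
      have h3 : ¬ w < u := lt_asymm (huv.trans hvw)
      simp [huv, hvw, h2, h3]
    · have h1 : ¬ v < v := lt_irrefl v
      have h3 : ¬ v < u := lt_asymm huv
      simp [huv, h1, h3, hd2]
    · rcases lt_trichotomy u w with huw | rfl | hwu
      · have h1 : ¬ v < w := lt_asymm hwv
        have h3 : ¬ w < u := lt_asymm huw
        simp [huv, huw, hwv, h1, h3]
      · have h1 : ¬ v < u := lt_asymm huv
        have h2 : ¬ u < u := lt_irrefl u
        simp [huv, h1, h2, hd1]
      · have h1 : ¬ v < w := lt_asymm hwv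
        have h2 : ¬ u < w := lt_asymm hwu
        simp [huv, hwu, h1, h2]
  · have h0 : ¬ u < u := lt_irrefl u
    have h2 : ¬ (u < w ∧ w < u) := fun h => lt_irrefl u (h.1.trans h.2)
    simp [h0, h2]
  · have h0 : ¬ v < u → True := fun _ => trivial
    have h1 : ¬ v < u ∨ True := Or.inr trivial
    have huv : ¬ u < v := lt_asymm hvu
    have h2 : ¬ (u < w ∧ w < v) := fun h => lt_asymm hvu (h.1.trans h.2)
    simp [huv, h2]

lemma comb [Fintype α] [LocallyFiniteOrderTop α] (F : α → α → α → M)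
    (hd1 : ∀ u v, F u v u = 0) (hd2 : ∀ u v, F u v v = 0)
    (hcyc : ∀ u v w, F u v w + F u w v + F v w u = 0) :
    ∑ u, ∑ v ∈ Finset.Ioi u, ∑ w, F u v w = 0 := by
  have step1 : ∑ u, ∑ v ∈ Finset.Ioi u, ∑ w, F u v w
      = ∑ u : α, ∑ v : α, ∑ w : α, (if u < v then F u v w else 0) := by
    refine Finset.sum_congr rfl fun u _ => ?_
    have : Finset.Ioi u = Finset.univ.filter (fun v => u < v) := by
      ext v; simp
    rw [this, Finset.sum_filter]
    refine Finset.sum_congr rfl fun v _ => ?_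
    split_ifs with h
    · rfl
    · simp
  rw [step1]
  have step2 : ∀ u v w : α, (if u < v then F u v w else 0)
      = ((if u < v ∧ v < w then F u v w else 0)
        + (if u < w ∧ w < v then F u v w else 0))
        + (if w < u ∧ u < v then F u v w else 0) := ptwise F hd1 hd2
  simp only [step2, Finset.sum_add_distrib]
  have hA2 : (∑ u : α, ∑ v : α, ∑ w : α, (if u < w ∧ w < v then F u v w else 0))
      = ∑ u : α, ∑ v : α, ∑ w : α, (if u < v ∧ v < w then F u w v else 0) :=
    Finset.sum_congr rfl fun u _ => Finset.sum_comm
  have hA3 : (∑ u : α, ∑ v : α, ∑ w : α, (if w < u ∧ u < v then F u v w else 0))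
      = ∑ u : α, ∑ v : α, ∑ w : α, (if u < v ∧ v < w then F v w u else 0) := by
    calc ∑ u : α, ∑ v : α, ∑ w : α, (if w < u ∧ u < v then F u v w else 0)
        = ∑ u : α, ∑ w : α, ∑ v : α, (if w < u ∧ u < v then F u v w else 0) :=
          Finset.sum_congr rfl fun u _ => Finset.sum_comm
      _ = ∑ w : α, ∑ u : α, ∑ v : α, (if w < u ∧ u < v then F u v w else 0) :=
          Finset.sum_comm
  rw [hA2, hA3, ← Finset.sum_add_distrib, ← Finset.sum_add_distrib]
  simp only [← Finset.sum_add_distrib]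
  refine Finset.sum_eq_zero fun u _ => Finset.sum_eq_zero fun v _ => Finset.sum_eq_zero fun w _ => ?_
  split_ifs with h
  · exact hcyc u v w
  · simp

end Comb

section Aux
variable {K : Type*} [Field K] {V : Type*} [AddCommGroup V] [Module K V]

lemma exterior_swap (x y : V) (r : ExteriorAlgebra K V) :
    ι K x * (ι K y * r) = -(ι K y * (ι K x * r)) := by
  have h : ι K x * ι K y = -(ι K y * ι K x) :=
    eq_neg_of_add_eq_zero_left (ExteriorAlgebra.ι_add_mul_swap x y)
  rw [← mul_assoc, h, neg_mul, mul_assoc]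

lemma exterior_rep (x : ExteriorAlgebra K V)
    (hx : x ∈ (LinearMap.range (ι K : V →ₗ[K] ExteriorAlgebra K V)) ^ 2) :
    ∃ (n : ℕ) (v w : Fin n → V), x = ∑ i, ι K (v i) * ι K (w i) := by
  rw [pow_two] at hx
  refine Submodule.mul_induction_on hx ?_ ?_
  · rintro _ ⟨v, rfl⟩ _ ⟨w, rfl⟩
    exact ⟨1, ![v], ![w], by simp⟩
  · rintro x y ⟨n1, v1, w1, rfl⟩ ⟨n2, v2, w2, rfl⟩
    refine ⟨n1 + n2, Fin.append v1 v2, Fin.append w1 w2, ?_⟩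
    rw [Fin.sum_univ_add]
    simp [Fin.append_left, Fin.append_right]

lemma iotaMulti_five (v : Fin 5 → V) :
    ιMulti K 5 v
      = ι K (v 0) * (ι K (v 1) * (ι K (v 2) * (ι K (v 3) * ι K (v 4)))) := by
  rw [ExteriorAlgebra.ιMulti_apply]
  simp only [List.ofFn_succ, List.ofFn_zero, List.prod_cons, List.prod_nil, mul_one, mul_assoc]
  rfl

lemma iotaMulti_six (v : Fin 6 → V) :
    ιMulti K 6 v
      = ι K (v 0) * (ι K (v 1) * (ι K (v 2) * (ι K (v 3) * (ι K (v 4) * ι K (v 5))))) := by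
  rw [ExteriorAlgebra.ιMulti_apply]
  simp only [List.ofFn_succ, List.ofFn_zero, List.prod_cons, List.prod_nil, mul_one, mul_assoc]
  rfl

lemma prod5_zero (v : Fin 5 → V) (i j : Fin 5) (hij : i ≠ j) (h : v i = v j) :
    ι K (v 0) * (ι K (v 1) * (ι K (v 2) * (ι K (v 3) * ι K (v 4)))) = 0 := by
  rw [← iotaMulti_five]
  exact AlternatingMap.map_eq_zero_of_eq _ v h hij

lemma rep04 (a b c d : V) : ι K a * (ι K b * (ι K c * (ι K d * ι K a))) = 0 := by
  simpa using prod5_zero (K := K) ![a, b, c, d, a] 0 4 (by decide) rfl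

lemma rep14 (a b c d : V) : ι K a * (ι K b * (ι K c * (ι K d * ι K b))) = 0 := by
  simpa using prod5_zero (K := K) ![a, b, c, d, b] 1 4 (by decide) rfl

lemma rep24 (a b c d : V) : ι K a * (ι K b * (ι K c * (ι K d * ι K c))) = 0 := by
  simpa using prod5_zero (K := K) ![a, b, c, d, c] 2 4 (by decide) rfl

lemma rep34 (a b c d : V) : ι K a * (ι K b * (ι K c * (ι K d * ι K d))) = 0 := by
  simpa using prod5_zero (K := K) ![a, b, c, d, d] 3 4 (by decide) rfl

lemma prod6_zero (hdim : Module.finrank K V = 5) (x1 x2 x3 x4 x5 x6 : V) :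
    ι K x1 * (ι K x2 * (ι K x3 * (ι K x4 * (ι K x5 * ι K x6)))) = 0 := by
  haveI : Module.Finite K V := Module.finite_of_finrank_eq_succ (n := 4) (by rw [hdim])
  have hli : ¬ LinearIndependent K ![x1, x2, x3, x4, x5, x6] := by
    intro h
    have := h.fintype_card_le_finrank
    rw [hdim] at this
    simp at this
  have h0 := AlternatingMap.map_linearDependent (ExteriorAlgebra.ιMulti K 6) _ hli
  rw [iotaMulti_six] at h0
  simpa using h0

lemma ι_swap0 (x y : V) : ι K x * ι K y = -(ι K y * ι K x) :=
  eq_neg_of_add_eq_zero_left (ExteriorAlgebra.ι_add_mul_swap x y)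

lemma rot3 (x y z : V) :
    ι K x * (ι K y * ι K z) = ι K z * (ι K x * ι K y) := by
  rw [exterior_swap x y, ι_swap0 x z, mul_neg, neg_neg, exterior_swap y z,
    ι_swap0 y x, mul_neg, neg_neg]

lemma rot5 (v x1 x2 x3 x4 : V) :
    ι K v * (ι K x1 * (ι K x2 * (ι K x3 * ι K x4)))
      = ι K x1 * (ι K x2 * (ι K x3 * (ι K x4 * ι K v))) := by
  rw [exterior_swap v x1, exterior_swap v x2, exterior_swap v x3, ι_swap0 v x4]
  simp only [mul_neg, neg_neg, neg_mul]

lemma pairswap5 (x1 x2 y1 y2 z : V) :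
    ι K x1 * (ι K x2 * (ι K y1 * (ι K y2 * ι K z)))
      = ι K y1 * (ι K y2 * (ι K x1 * (ι K x2 * ι K z))) := by
  rw [exterior_swap x2 y1, exterior_swap x2 y2]
  simp only [mul_neg, neg_neg]
  rw [exterior_swap x1 y1, exterior_swap x1 y2]
  simp only [mul_neg, neg_neg]

variable (θ : Module.Dual K V)

lemma contr2 (x1 x2 : V) :
    CliffordAlgebra.contractLeft θ (ι K x1 * ι K x2)
      = θ x1 • ι K x2 - θ x2 • ι K x1 := by
  rw [CliffordAlgebra.contractLeft_ι_mul, CliffordAlgebra.contractLeft_ι]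
  rw [← Algebra.commutes, ← Algebra.smul_def]

lemma contr3 (x1 x2 x3 : V) :
    CliffordAlgebra.contractLeft θ (ι K x1 * (ι K x2 * ι K x3))
      = θ x1 • (ι K x2 * ι K x3) - θ x2 • (ι K x1 * ι K x3)
        + θ x3 • (ι K x1 * ι K x2) := by
  rw [CliffordAlgebra.contractLeft_ι_mul, contr2]
  simp only [mul_sub, mul_smul_comm]
  abel

lemma contr4 (x1 x2 x3 x4 : V) :
    CliffordAlgebra.contractLeft θ (ι K x1 * (ι K x2 * (ι K x3 * ι K x4)))
      = θ x1 • (ι K x2 * (ι K x3 * ι K x4)) - θ x2 • (ι K x1 * (ι K x3 * ι K x4))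
        + θ x3 • (ι K x1 * (ι K x2 * ι K x4)) - θ x4 • (ι K x1 * (ι K x2 * ι K x3)) := by
  rw [CliffordAlgebra.contractLeft_ι_mul, contr3]
  simp only [mul_sub, mul_add, mul_smul_comm]
  abel

lemma contr5 (x1 x2 x3 x4 x5 : V) :
    CliffordAlgebra.contractLeft θ (ι K x1 * (ι K x2 * (ι K x3 * (ι K x4 * ι K x5))))
      = θ x1 • (ι K x2 * (ι K x3 * (ι K x4 * ι K x5)))
        - θ x2 • (ι K x1 * (ι K x3 * (ι K x4 * ι K x5)))
        + θ x3 • (ι K x1 * (ι K x2 * (ι K x4 * ι K x5)))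
        - θ x4 • (ι K x1 * (ι K x2 * (ι K x3 * ι K x5)))
        + θ x5 • (ι K x1 * (ι K x2 * (ι K x3 * ι K x4))) := by
  rw [CliffordAlgebra.contractLeft_ι_mul, contr4]
  simp only [mul_sub, mul_add, mul_smul_comm]
  abel

lemma contr6 (x1 x2 x3 x4 x5 x6 : V) :
    CliffordAlgebra.contractLeft θ
        (ι K x1 * (ι K x2 * (ι K x3 * (ι K x4 * (ι K x5 * ι K x6)))))
      = θ x1 • (ι K x2 * (ι K x3 * (ι K x4 * (ι K x5 * ι K x6))))
        - θ x2 • (ι K x1 * (ι K x3 * (ι K x4 * (ι K x5 * ι K x6))))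
        + θ x3 • (ι K x1 * (ι K x2 * (ι K x4 * (ι K x5 * ι K x6))))
        - θ x4 • (ι K x1 * (ι K x2 * (ι K x3 * (ι K x5 * ι K x6))))
        + θ x5 • (ι K x1 * (ι K x2 * (ι K x3 * (ι K x4 * ι K x6))))
        - θ x6 • (ι K x1 * (ι K x2 * (ι K x3 * (ι K x4 * ι K x5)))) := by
  rw [CliffordAlgebra.contractLeft_ι_mul, contr5]
  simp only [mul_sub, mul_add, mul_smul_comm]
  abel

lemma syzL (hdim : Module.finrank K V = 5) (G : ExteriorAlgebra K V) (x1 x2 x3 x4 x5 x6 : V) :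
    (G * ι K x1) ⊗ₜ[K] (ι K x2 * (ι K x3 * (ι K x4 * (ι K x5 * ι K x6))))
      - (G * ι K x2) ⊗ₜ[K] (ι K x1 * (ι K x3 * (ι K x4 * (ι K x5 * ι K x6))))
      + (G * ι K x3) ⊗ₜ[K] (ι K x1 * (ι K x2 * (ι K x4 * (ι K x5 * ι K x6))))
      - (G * ι K x4) ⊗ₜ[K] (ι K x1 * (ι K x2 * (ι K x3 * (ι K x5 * ι K x6))))
      + (G * ι K x5) ⊗ₜ[K] (ι K x1 * (ι K x2 * (ι K x3 * (ι K x4 * ι K x6))))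
      - (G * ι K x6) ⊗ₜ[K] (ι K x1 * (ι K x2 * (ι K x3 * (ι K x4 * ι K x5)))) = 0 := by
  haveI : Module.Finite K V := Module.finite_of_finrank_eq_succ (n := 4) (by rw [hdim])
  set B := Module.Free.chooseBasis K V with hB
  have h0 : ∑ s, (G * ι K (B s)) ⊗ₜ[K]
      (CliffordAlgebra.contractLeft (B.coord s)
        (ι K x1 * (ι K x2 * (ι K x3 * (ι K x4 * (ι K x5 * ι K x6)))))) = 0 :=
    Finset.sum_eq_zero fun s _ => by rw [prod6_zero hdim]; simp
  have hrepr : ∀ (y : V) (P : ExteriorAlgebra K V),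
      (∑ s, (B.coord s y) • (G * ι K (B s)) ⊗ₜ[K] P) = (G * ι K y) ⊗ₜ[K] P := by
    intro y P
    simp only [smul_tmul']
    rw [← sum_tmul]
    congr 1
    simp only [Module.Basis.coord_apply]
    calc ∑ s, B.repr y s • (G * ι K (B s))
        = G * ι K (∑ s, B.repr y s • B s) := by
          simp only [map_sum, map_smul, Finset.mul_sum, mul_smul_comm]
      _ = G * ι K y := by rw [B.sum_repr]
  simp only [contr6, tmul_sub, tmul_add, tmul_smul, smul_tmul',
    Finset.sum_add_distrib, Finset.sum_sub_distrib] at h0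
  simp only [smul_tmul'] at hrepr
  rw [hrepr, hrepr, hrepr, hrepr, hrepr, hrepr] at h0
  exact h0

lemma syzR (hdim : Module.finrank K V = 5) (G : ExteriorAlgebra K V) (x1 x2 x3 x4 x5 x6 : V) :
    (ι K x2 * (ι K x3 * (ι K x4 * (ι K x5 * ι K x6)))) ⊗ₜ[K] (ι K x1 * G)
      - (ι K x1 * (ι K x3 * (ι K x4 * (ι K x5 * ι K x6)))) ⊗ₜ[K] (ι K x2 * G)
      + (ι K x1 * (ι K x2 * (ι K x4 * (ι K x5 * ι K x6)))) ⊗ₜ[K] (ι K x3 * G)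
      - (ι K x1 * (ι K x2 * (ι K x3 * (ι K x5 * ι K x6)))) ⊗ₜ[K] (ι K x4 * G)
      + (ι K x1 * (ι K x2 * (ι K x3 * (ι K x4 * ι K x6)))) ⊗ₜ[K] (ι K x5 * G)
      - (ι K x1 * (ι K x2 * (ι K x3 * (ι K x4 * ι K x5)))) ⊗ₜ[K] (ι K x6 * G) = 0 := by
  haveI : Module.Finite K V := Module.finite_of_finrank_eq_succ (n := 4) (by rw [hdim])
  set B := Module.Free.chooseBasis K V with hB
  have h0 : ∑ s, (CliffordAlgebra.contractLeft (B.coord s)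
        (ι K x1 * (ι K x2 * (ι K x3 * (ι K x4 * (ι K x5 * ι K x6))))))
      ⊗ₜ[K] (ι K (B s) * G) = 0 :=
    Finset.sum_eq_zero fun s _ => by rw [prod6_zero hdim]; simp
  have hrepr : ∀ (y : V) (P : ExteriorAlgebra K V),
      (∑ s, (B.coord s y) • P ⊗ₜ[K] (ι K (B s) * G)) = P ⊗ₜ[K] (ι K y * G) := by
    intro y P
    simp only [← tmul_smul]
    rw [← tmul_sum]
    congr 1
    simp only [Module.Basis.coord_apply]
    calc ∑ s, B.repr y s • (ι K (B s) * G)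
        = ι K (∑ s, B.repr y s • B s) * G := by
          simp only [map_sum, map_smul, Finset.sum_mul, smul_mul_assoc]
      _ = ι K y * G := by rw [B.sum_repr]
  simp only [contr6, sub_tmul, add_tmul, smul_tmul',
    Finset.sum_add_distrib, Finset.sum_sub_distrib] at h0
  simp only [smul_tmul'] at hrepr
  rw [hrepr, hrepr, hrepr, hrepr, hrepr, hrepr] at h0
  exact h0

end Aux
section Key
variable {K : Type*} [Field K] {V : Type*} [AddCommGroup V] [Module K V]

lemma move1past2 (x y z : V) (r : ExteriorAlgebra K V) :
    ι K x * (ι K y * (ι K z * r)) = ι K y * (ι K z * (ι K x * r)) := by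
  rw [exterior_swap x y, exterior_swap x z]
  simp only [mul_neg, neg_neg]

lemma key (hdim : Module.finrank K V = 5) (m : ℕ) (p q : Fin m → V) (a b c d : V) :
    ((∑ u, ∑ v ∈ Finset.Ioi u, ι K (p u) * ι K (q u) * ι K (p v) * ι K (q v)) * ι K a)
        ⊗ₜ[K] ((∑ k, ι K (p k) * ι K (q k)) * (ι K c * (ι K d * ι K b)))
      - ((∑ u, ∑ v ∈ Finset.Ioi u, ι K (p u) * ι K (q u) * ι K (p v) * ι K (q v)) * ι K b)
        ⊗ₜ[K] ((∑ k, ι K (p k) * ι K (q k)) * (ι K c * (ι K d * ι K a)))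
      + (((∑ u, ∑ v ∈ Finset.Ioi u, ι K (p u) * ι K (q u) * ι K (p v) * ι K (q v)) * ι K c)
        ⊗ₜ[K] ((∑ k, ι K (p k) * ι K (q k)) * (ι K a * (ι K b * ι K d)))
      - ((∑ u, ∑ v ∈ Finset.Ioi u, ι K (p u) * ι K (q u) * ι K (p v) * ι K (q v)) * ι K d)
        ⊗ₜ[K] ((∑ k, ι K (p k) * ι K (q k)) * (ι K a * (ι K b * ι K c)))) = 0 := by
  set Q : ExteriorAlgebra K V :=
    ∑ u, ∑ v ∈ Finset.Ioi u, ι K (p u) * ι K (q u) * ι K (p v) * ι K (q v) with hQdef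
  set M : ExteriorAlgebra K V := ∑ k, ι K (p k) * ι K (q k) with hMdef
  set ω : ExteriorAlgebra K V := ι K a * (ι K b * (ι K c * ι K d)) with hω
  rw [rot3 c d b, rot3 c d a]
  -- per-k shaped syzygy
  have shaped : ∀ k,
      (Q * ι K a) ⊗ₜ[K] (ι K (p k) * (ι K (q k) * (ι K b * (ι K c * ι K d))))
        + (Q * ι K (p k)) ⊗ₜ[K] (ι K (q k) * ω)
        - (Q * ι K (q k)) ⊗ₜ[K] (ι K (p k) * ω)
        - (Q * ι K b) ⊗ₜ[K] (ι K (p k) * (ι K (q k) * (ι K a * (ι K c * ι K d))))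
        + (Q * ι K c) ⊗ₜ[K] (ι K (p k) * (ι K (q k) * (ι K a * (ι K b * ι K d))))
        - (Q * ι K d) ⊗ₜ[K] (ι K (p k) * (ι K (q k) * (ι K a * (ι K b * ι K c)))) = 0 := by
    intro k
    have h := syzL hdim Q a (p k) (q k) b c d
    rw [exterior_swap a (q k) (ι K b * (ι K c * ι K d)),
      exterior_swap a (p k) (ι K b * (ι K c * ι K d)),
      move1past2 a (p k) (q k) (ι K c * ι K d),
      move1past2 a (p k) (q k) (ι K b * ι K d),
      move1past2 a (p k) (q k) (ι K b * ι K c), ← hω] at h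
    simp only [tmul_neg, sub_neg_eq_add] at h
    abel_nf at h ⊢
    exact h
  have hsum := Finset.sum_eq_zero (fun k (_ : k ∈ Finset.univ) => shaped k)
  have hM : ∀ R : ExteriorAlgebra K V,
      (∑ k, ι K (p k) * (ι K (q k) * R)) = M * R := by
    intro R
    rw [hMdef, Finset.sum_mul]
    exact Finset.sum_congr rfl fun k _ => (mul_assoc _ _ _).symm
  simp only [Finset.sum_add_distrib, Finset.sum_sub_distrib] at hsum
  simp only [← tmul_sum] at hsum
  simp only [hM] at hsum
  -- step 2: the remaining bilinear term vanishes
  have h2 : (∑ k, ((Q * ι K (q k)) ⊗ₜ[K] (ι K (p k) * ω)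
      - (Q * ι K (p k)) ⊗ₜ[K] (ι K (q k) * ω))) = 0 := by
    have hQx : ∀ x : V, Q * ι K x = ∑ u, ∑ v ∈ Finset.Ioi u,
        ι K (p u) * (ι K (q u) * (ι K (p v) * (ι K (q v) * ι K x))) := by
      intro x
      rw [hQdef, Finset.sum_mul]
      refine Finset.sum_congr rfl fun u _ => ?_
      rw [Finset.sum_mul]
      refine Finset.sum_congr rfl fun v _ => ?_
      simp only [mul_assoc]
    simp only [hQx, sum_tmul, ← Finset.sum_sub_distrib]
    rw [Finset.sum_comm]
    have inner : ∀ u : Fin m, (∑ k, ∑ v ∈ Finset.Ioi u,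
        ((ι K (p u) * (ι K (q u) * (ι K (p v) * (ι K (q v) * ι K (q k))))) ⊗ₜ[K] (ι K (p k) * ω)
        - (ι K (p u) * (ι K (q u) * (ι K (p v) * (ι K (q v) * ι K (p k))))) ⊗ₜ[K] (ι K (q k) * ω)))
        = ∑ v ∈ Finset.Ioi u, ∑ k,
        ((ι K (p u) * (ι K (q u) * (ι K (p v) * (ι K (q v) * ι K (q k))))) ⊗ₜ[K] (ι K (p k) * ω)
        - (ι K (p u) * (ι K (q u) * (ι K (p v) * (ι K (q v) * ι K (p k))))) ⊗ₜ[K] (ι K (q k) * ω)) :=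
      fun u => Finset.sum_comm
    simp only [inner]
    refine comb (fun u v k =>
      (ι K (p u) * (ι K (q u) * (ι K (p v) * (ι K (q v) * ι K (q k))))) ⊗ₜ[K] (ι K (p k) * ω)
      - (ι K (p u) * (ι K (q u) * (ι K (p v) * (ι K (q v) * ι K (p k))))) ⊗ₜ[K] (ι K (q k) * ω))
      ?_ ?_ ?_
    · intro u v
      simp [rep04, rep14]
    · intro u v
      simp [rep24, rep34]
    · intro u v w
      have h := syzR hdim ω (p u) (q u) (p v) (q v) (p w) (q w)
      rw [rot5 (q u) (p v) (q v) (p w) (q w), rot5 (p u) (p v) (q v) (p w) (q w),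
        ← rot3 (p w) (q w) (q v), ← rot3 (p w) (q w) (p v)] at h
      abel_nf at h ⊢
      exact h
  rw [Finset.sum_sub_distrib] at h2
  -- combine
  have final :
      (Q * ι K a) ⊗ₜ[K] (M * (ι K b * (ι K c * ι K d)))
        - (Q * ι K b) ⊗ₜ[K] (M * (ι K a * (ι K c * ι K d)))
        + ((Q * ι K c) ⊗ₜ[K] (M * (ι K a * (ι K b * ι K d)))
        - (Q * ι K d) ⊗ₜ[K] (M * (ι K a * (ι K b * ι K c))))
      = ((Q * ι K a) ⊗ₜ[K] (M * (ι K b * (ι K c * ι K d)))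
          + (∑ k, (Q * ι K (p k)) ⊗ₜ[K] (ι K (q k) * ω))
          - (∑ k, (Q * ι K (q k)) ⊗ₜ[K] (ι K (p k) * ω))
          - (Q * ι K b) ⊗ₜ[K] (M * (ι K a * (ι K c * ι K d)))
          + (Q * ι K c) ⊗ₜ[K] (M * (ι K a * (ι K b * ι K d)))
          - (Q * ι K d) ⊗ₜ[K] (M * (ι K a * (ι K b * ι K c))))
        + ((∑ k, (Q * ι K (q k)) ⊗ₜ[K] (ι K (p k) * ω))
          - (∑ k, (Q * ι K (p k)) ⊗ₜ[K] (ι K (q k) * ω))) := by abel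
  rw [final, hsum, h2, add_zero]

end Key

/-- For a 5-dimensional vector space `V` over `K` and
`μ, ν, ξ ∈ Λ²V`, one has `ν(μ^□, μ ∧ ξ) = −ξ(μ^□, μ ∧ ν)`, where `μ(·,·)` is the
contraction of `Λ²V` against two elements of `Λ⁴V` landing in `(Λ⁵V)^⊗2` and
`□` is the quadratic wedge-square map. -/
theorem stmt_6 (K : Type*) [Field K] (V : Type*) [AddCommGroup V] [Module K V]
    (hdim : Module.finrank K V = 5)
    (sq : ExteriorAlgebra K V → ExteriorAlgebra K V)
    (hsq : ∀ (n : ℕ) (v w : Fin n → V),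
      sq (∑ i, ι K (v i) * ι K (w i))
        = ∑ i, ∑ j ∈ Finset.Ioi i, ι K (v i) * ι K (w i) * ι K (v j) * ι K (w j))
    (C : ExteriorAlgebra K V → ExteriorAlgebra K V → ExteriorAlgebra K V →
      ExteriorAlgebra K V ⊗[K] ExteriorAlgebra K V)
    (hC : ∀ (n : ℕ) (v w : Fin n → V) (α β : ExteriorAlgebra K V),
      C (∑ i, ι K (v i) * ι K (w i)) α β
        = ∑ i, ((α * ι K (v i)) ⊗ₜ[K] (β * ι K (w i))
            - (α * ι K (w i)) ⊗ₜ[K] (β * ι K (v i))))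
    (μ ν ξ : ExteriorAlgebra K V)
    (hμ : μ ∈ (LinearMap.range (ι K : V →ₗ[K] ExteriorAlgebra K V)) ^ 2)
    (hν : ν ∈ (LinearMap.range (ι K : V →ₗ[K] ExteriorAlgebra K V)) ^ 2)
    (hξ : ξ ∈ (LinearMap.range (ι K : V →ₗ[K] ExteriorAlgebra K V)) ^ 2) :
    C ν (sq μ) (μ * ξ) = - C ξ (sq μ) (μ * ν) := by
  obtain ⟨m, p, q, hμr⟩ := exterior_rep μ hμ
  obtain ⟨n, va, vb, hνr⟩ := exterior_rep ν hν
  obtain ⟨r, vc, vd, hξr⟩ := exterior_rep ξ hξ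
  subst hμr hνr hξr
  rw [hC, hC, hsq]
  rw [eq_neg_iff_add_eq_zero]
  have expand : ∀ (l : ℕ) (y z : Fin l → V) (x : V),
      (∑ k, ι K (p k) * ι K (q k)) * (∑ j, ι K (y j) * ι K (z j)) * ι K x
        = ∑ j, (∑ k, ι K (p k) * ι K (q k)) * (ι K (y j) * (ι K (z j) * ι K x)) := by
    intro l y z x
    rw [Finset.mul_sum, Finset.sum_mul]
    refine Finset.sum_congr rfl fun j _ => ?_
    simp only [mul_assoc]
  simp only [expand, tmul_sum, ← Finset.sum_sub_distrib]
  rw [Finset.sum_comm]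
  rw [← Finset.sum_add_distrib]
  refine Finset.sum_eq_zero fun j _ => ?_
  rw [← Finset.sum_add_distrib]
  refine Finset.sum_eq_zero fun i _ => ?_
  exact key hdim m p q (va i) (vb i) (vc j) (vd j)
end

section
/- Let Q be a quintic algebra over a field K with quotient L = Q/K (a 4-dimensional space), and define the five-variable form F(a,b,c,d,e) = (a∧b∧c∧bc)(a∧d∧e∧de) + (a∧b∧d∧bd)(a∧e∧c∧ec) + (a∧b∧e∧be)(a∧c∧d∧cd), valued in (Λ⁴L)^⊗2, where each product like bc is computed in Q and projected to L. If Q is very degenerate (i.e., there exist subspaces Q₄ ⊆ Q₃ ⊆ Q with dim Q₄ = 4, dim Q₃ = 3 and Q₄·Q₃ = 0), then F is identically zero. -/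
open ExteriorAlgebra TensorProduct

lemma wedge_sw {R M : Type*} [CommRing R] [AddCommGroup M] [Module R M] (x y : M) :
    ι R y * ι R x = -(ι R x * ι R y) :=
  eq_neg_of_add_eq_zero_left (ι_add_mul_swap y x)

lemma wedge_aux1 {R M : Type*} [CommRing R] [AddCommGroup M] [Module R M] (x y z : M) :
    ι R x * ι R y * ι R z * ι R z = 0 := by
  rw [mul_assoc, ι_sq_zero, mul_zero]

lemma wedge_aux2 {R M : Type*} [CommRing R] [AddCommGroup M] [Module R M] (x y z : M) :
    ι R x * ι R y * ι R z * ι R y = 0 := by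
  simp only [mul_assoc, wedge_sw y z, mul_neg]
  rw [← mul_assoc (ι R y), ι_sq_zero, zero_mul]
  simp

set_option maxHeartbeats 4000000 in
lemma wedge4 {R M : Type*} [CommRing R] [AddCommGroup M] [Module R M]
    (e₁ e₂ e₃ e₄ : M) (a1 a2 a3 a4 b1 b2 b3 b4 c1 c2 c3 c4 d1 d2 d3 d4 : R) :
    ι R (a1•e₁+a2•e₂+a3•e₃+a4•e₄) * ι R (b1•e₁+b2•e₂+b3•e₃+b4•e₄) *
      ι R (c1•e₁+c2•e₂+c3•e₃+c4•e₄) * ι R (d1•e₁+d2•e₂+d3•e₃+d4•e₄)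
    = (a1*b2*c3*d4 - a1*b2*c4*d3 - a1*b3*c2*d4 + a1*b3*c4*d2 + a1*b4*c2*d3 - a1*b4*c3*d2 - a2*b1*c3*d4 + a2*b1*c4*d3 + a2*b3*c1*d4 - a2*b3*c4*d1 - a2*b4*c1*d3 + a2*b4*c3*d1 + a3*b1*c2*d4 - a3*b1*c4*d2 - a3*b2*c1*d4 + a3*b2*c4*d1 + a3*b4*c1*d2 - a3*b4*c2*d1 - a4*b1*c2*d3 + a4*b1*c3*d2 + a4*b2*c1*d3 - a4*b2*c3*d1 - a4*b3*c1*d2 + a4*b3*c2*d1) •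
      (ι R e₁ * ι R e₂ * ι R e₃ * ι R e₄) := by
  have sq : ∀ x : M, ι R x * ι R x = 0 := ι_sq_zero
  have sw : ∀ x y : M, ι R y * ι R x = -(ι R x * ι R y) := fun x y => wedge_sw x y
  have sq' : ∀ (x : M) (z : ExteriorAlgebra R M), ι R x * (ι R x * z) = 0 := fun x z => by
    rw [← mul_assoc, sq, zero_mul]
  have sw' : ∀ (x y : M) (z : ExteriorAlgebra R M), ι R y * (ι R x * z) = -(ι R x * (ι R y * z)) := fun x y z => by
    rw [← mul_assoc, sw, neg_mul, mul_assoc]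
  simp only [map_add, map_smul, add_mul, mul_add, smul_mul_assoc, mul_smul_comm, mul_assoc,
    sq e₁, sq e₂, sq e₃, sq e₄, sq' e₁, sq' e₂, sq' e₃, sq' e₄,
    sw e₁ e₂, sw e₁ e₃, sw e₁ e₄, sw e₂ e₃, sw e₂ e₄, sw e₃ e₄,
    sw' e₁ e₂, sw' e₁ e₃, sw' e₁ e₄, sw' e₂ e₃, sw' e₂ e₄, sw' e₃ e₄,
    mul_neg, neg_mul, neg_neg, smul_neg, smul_smul, smul_zero, mul_zero, zero_mul,
    add_zero, zero_add, neg_zero]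
  module

set_option maxHeartbeats 4000000 in
/-- Let `Q` be a quintic algebra over a field `K`, `L = Q/K`, and let
`F(a,b,c,d,e) = (a∧b∧c∧bc)(a∧d∧e∧de) + (a∧b∧d∧bd)(a∧e∧c∧ec) + (a∧b∧e∧be)(a∧c∧d∧cd)`
be the pentaquadratic form valued in `(Λ⁴L)^⊗2` (products of elements of `Λ⁴L`
being formed in `Λ⁴L ⊗ Λ⁴L`), where products like `bc` are computed in `Q` and
projected to `L`. If `Q` is very degenerate — i.e., there are subspaces
`Q₃ ⊆ Q₄ ⊆ Q` with `dim Q₃ = 3`, `dim Q₄ = 4` and `Q₄·Q₃ = 0` — then `F` is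
identically zero. -/
theorem stmt_10 (K : Type*) [Field K] (Q : Type*) [CommRing Q] [Algebra K Q]
    (hdim : Module.finrank K Q = 5)
    (L : Type*) [AddCommGroup L] [Module K L]
    (π : Q →ₗ[K] L) (hπ : Function.Surjective π)
    (hker : LinearMap.ker π = LinearMap.range (Algebra.linearMap K Q))
    (Q₃ Q₄ : Submodule K Q) (hle : Q₃ ≤ Q₄)
    (h3 : Module.finrank K Q₃ = 3) (h4 : Module.finrank K Q₄ = 4)
    (hzero : ∀ x ∈ Q₄, ∀ y ∈ Q₃, x * y = 0)
    (a b c d e : Q) :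
    (ι K (π a) * ι K (π b) * ι K (π c) * ι K (π (b * c)))
        ⊗ₜ[K] (ι K (π a) * ι K (π d) * ι K (π e) * ι K (π (d * e)))
      + (ι K (π a) * ι K (π b) * ι K (π d) * ι K (π (b * d)))
        ⊗ₜ[K] (ι K (π a) * ι K (π e) * ι K (π c) * ι K (π (e * c)))
      + (ι K (π a) * ι K (π b) * ι K (π e) * ι K (π (b * e)))
        ⊗ₜ[K] (ι K (π a) * ι K (π c) * ι K (π d) * ι K (π (c * d)))
      = (0 : ExteriorAlgebra K L ⊗[K] ExteriorAlgebra K L) := by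
  have hfin : FiniteDimensional K Q := FiniteDimensional.of_finrank_pos (by rw [hdim]; norm_num)
  have : Nontrivial Q := Module.nontrivial_of_finrank_pos (R := K) (by rw [hdim]; norm_num)
  -- π kills scalars
  have hπalg : ∀ k : K, π (algebraMap K Q k) = 0 := fun k => by
    have hm : algebraMap K Q k ∈ LinearMap.ker π := by
      rw [hker]; exact ⟨k, rfl⟩
    exact LinearMap.mem_ker.mp hm
  have hπ1 : π 1 = 0 := by have := hπalg 1; rwa [map_one] at this
  -- no nonzero scalar lies in Q₄
  have halg4 : ∀ k : K, (k • (1:Q)) ∈ Q₄ → k = 0 := by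
    intro k hk
    by_contra hk0
    have hQ3bot : Q₃ = ⊥ := by
      rw [Submodule.eq_bot_iff]
      intro y hy
      have h0 : (k • (1:Q)) * y = 0 := hzero _ hk _ hy
      rw [smul_mul_assoc, one_mul] at h0
      have := congrArg (fun z => k⁻¹ • z) h0
      simpa [inv_smul_smul₀ hk0] using this
    rw [hQ3bot, finrank_bot] at h3
    exact absurd h3 (by norm_num)
  have hdisj : Disjoint (K ∙ (1:Q)) Q₄ := by
    rw [Submodule.disjoint_def]
    intro x hx1 hx4
    obtain ⟨k, rfl⟩ := Submodule.mem_span_singleton.mp hx1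
    rw [halg4 k hx4, zero_smul]
  have hsup : (K ∙ (1:Q)) ⊔ Q₄ = ⊤ := by
    apply Submodule.eq_top_of_finrank_eq
    have h := Submodule.finrank_sup_add_finrank_inf_eq (K ∙ (1:Q)) Q₄
    rw [hdisj.eq_bot, finrank_bot, add_zero, finrank_span_singleton (one_ne_zero), h4] at h
    rw [hdim]; omega
  -- choose v
  have hQ34 : Q₃ < Q₄ := lt_of_le_of_ne hle (fun h => by rw [h, h4] at h3; exact absurd h3 (by norm_num))
  obtain ⟨v, hv4, hv3⟩ := SetLike.exists_of_lt hQ34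
  have hv0 : v ≠ 0 := fun h => hv3 (h ▸ Q₃.zero_mem)
  have hQ4eq : Q₃ ⊔ (K ∙ v) = Q₄ := by
    apply Submodule.eq_of_le_of_finrank_le
      (sup_le hle ((Submodule.span_singleton_le_iff_mem v Q₄).mpr hv4))
    have hdisj2 : Disjoint Q₃ (K ∙ v) := by
      rw [Submodule.disjoint_def]
      intro x hx3 hxv
      obtain ⟨k, rfl⟩ := Submodule.mem_span_singleton.mp hxv
      rcases eq_or_ne k 0 with h | h
      · rw [h, zero_smul]
      · exact absurd (by simpa [inv_smul_smul₀ h] using Q₃.smul_mem k⁻¹ hx3) hv3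
    have h := Submodule.finrank_sup_add_finrank_inf_eq Q₃ (K ∙ v)
    rw [hdisj2.eq_bot, finrank_bot, add_zero, finrank_span_singleton hv0, h3] at h
    rw [h4]; omega
  -- basis of Q₃
  have hfin3 : FiniteDimensional K Q₃ := inferInstance
  let uB : Module.Basis (Fin 3) K Q₃ := Module.finBasisOfFinrankEq K Q₃ h3
  set u0 : Q := (uB 0 : Q) with hu0def
  set u1 : Q := (uB 1 : Q) with hu1def
  set u2 : Q := (uB 2 : Q) with hu2def
  have hu0 : u0 ∈ Q₃ := (uB 0).2
  have hu1 : u1 ∈ Q₃ := (uB 1).2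
  have hu2 : u2 ∈ Q₃ := (uB 2).2
  have hcoord : ∀ y ∈ Q₃, ∃ t1 t2 t3 : K, y = t1 • u0 + t2 • u1 + t3 • u2 := by
    intro y hy
    have h2 := (uB.sum_repr ⟨y, hy⟩).symm
    rw [Fin.sum_univ_three] at h2
    have h3' := congrArg (Subtype.val) h2
    simp only [Submodule.coe_add, SetLike.val_smul] at h3'
    exact ⟨_, _, _, h3'⟩
  -- decomposition of an arbitrary element
  have hdecomp : ∀ x : Q, ∃ k t1 t2 t3 t4 : K,
      x = k • (1:Q) + (t1 • u0 + t2 • u1 + t3 • u2) + t4 • v := by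
    intro x
    have hx : x ∈ (K ∙ (1:Q)) ⊔ Q₄ := by rw [hsup]; exact Submodule.mem_top
    obtain ⟨p, hp, q, hq, hpq⟩ := Submodule.mem_sup.mp hx
    obtain ⟨k, rfl⟩ := Submodule.mem_span_singleton.mp hp
    rw [← hQ4eq] at hq
    obtain ⟨y, hy, z, hz, hyz⟩ := Submodule.mem_sup.mp hq
    obtain ⟨t4, rfl⟩ := Submodule.mem_span_singleton.mp hz
    obtain ⟨t1, t2, t3, hy123⟩ := hcoord y hy
    refine ⟨k, t1, t2, t3, t4, ?_⟩
    rw [← hpq, ← hyz, hy123]; abel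
  have hmem3 : ∀ t1 t2 t3 : K, t1 • u0 + t2 • u1 + t3 • u2 ∈ Q₃ := fun t1 t2 t3 =>
    add_mem (add_mem (Q₃.smul_mem _ hu0) (Q₃.smul_mem _ hu1)) (Q₃.smul_mem _ hu2)
  -- π-coordinates
  have hπcoord : ∀ (x : Q) (k t1 t2 t3 t4 : K),
      x = k • (1:Q) + (t1 • u0 + t2 • u1 + t3 • u2) + t4 • v →
      π x = t1 • π u0 + t2 • π u1 + t3 • π u2 + t4 • π v := by
    intro x k t1 t2 t3 t4 hx
    rw [hx]
    simp only [map_add, map_smul, hπ1, smul_zero, zero_add]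
  -- multiplication rule
  have hmul : ∀ (x y : Q) (kx ky ξ η : K) (x3 y3 : Q), x3 ∈ Q₃ → y3 ∈ Q₃ →
      x = kx • (1:Q) + x3 + ξ • v → y = ky • (1:Q) + y3 + η • v →
      π (x * y) = kx • π y + ky • π x + (ξ * η) • π (v * v) := by
    intro x y kx ky ξ η x3 y3 hx3 hy3 hx hy
    have e1 : x3 * y3 = 0 := hzero x3 (hle hx3) y3 hy3
    have e2 : v * y3 = 0 := hzero v hv4 y3 hy3
    have e3 : x3 * v = 0 := by rw [mul_comm]; exact hzero v hv4 x3 hx3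
    have hxy : x * y = kx • y + ky • x - (kx * ky) • (1:Q) + (ξ * η) • (v * v) := by
      rw [hx, hy]
      simp only [mul_add, add_mul, smul_mul_assoc, mul_smul_comm, smul_smul,
        one_mul, mul_one, e1, e2, e3, smul_zero, zero_add, add_zero]
      module
    rw [hxy]
    simp only [map_add, map_sub, map_smul, hπ1, smul_zero, sub_zero]
  -- decompositions of a b c d e and v*v
  obtain ⟨ka, a1, a2, a3, a4, hda⟩ := hdecomp a
  obtain ⟨kb, b1, b2, b3, b4, hdb⟩ := hdecomp b
  obtain ⟨kc, c1, c2, c3, c4, hdc⟩ := hdecomp c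
  obtain ⟨kd, d1, d2, d3, d4, hdd⟩ := hdecomp d
  obtain ⟨ke, n1, n2, n3, n4, hde'⟩ := hdecomp e
  obtain ⟨kv, s1, s2, s3, s4, hds⟩ := hdecomp (v * v)
  have hπa := hπcoord a ka a1 a2 a3 a4 hda
  have hπb := hπcoord b kb b1 b2 b3 b4 hdb
  have hπc := hπcoord c kc c1 c2 c3 c4 hdc
  have hπd := hπcoord d kd d1 d2 d3 d4 hdd
  have hπe := hπcoord e ke n1 n2 n3 n4 hde'
  have hπs := hπcoord (v * v) kv s1 s2 s3 s4 hds
  have hbc := hmul b c kb kc b4 c4 _ _ (hmem3 b1 b2 b3) (hmem3 c1 c2 c3) hdb hdc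
  have hde2 := hmul d e kd ke d4 n4 _ _ (hmem3 d1 d2 d3) (hmem3 n1 n2 n3) hdd hde'
  have hbd := hmul b d kb kd b4 d4 _ _ (hmem3 b1 b2 b3) (hmem3 d1 d2 d3) hdb hdd
  have hec := hmul e c ke kc n4 c4 _ _ (hmem3 n1 n2 n3) (hmem3 c1 c2 c3) hde' hdc
  have hbe := hmul b e kb ke b4 n4 _ _ (hmem3 b1 b2 b3) (hmem3 n1 n2 n3) hdb hde'
  have hcd := hmul c d kc kd c4 d4 _ _ (hmem3 c1 c2 c3) (hmem3 d1 d2 d3) hdc hdd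
  rw [hbc, hde2, hbd, hec, hbe, hcd]
  simp only [map_add, map_smul, mul_add, mul_smul_comm,
    wedge_aux1, wedge_aux2, smul_zero, zero_add, add_zero]
  rw [hπa, hπb, hπc, hπd, hπe, hπs]
  simp only [wedge4]
  simp only [tmul_smul, ← smul_tmul', smul_smul]
  have key : ∀ (X : ExteriorAlgebra K L ⊗[K] ExteriorAlgebra K L) (α β γ : K),
      α + β + γ = 0 → α • X + β • X + γ • X = 0 := by
    intro X α β γ h
    rw [← add_smul, ← add_smul, h, zero_smul]
  refine key _ _ _ _ ?_
  ring
end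

section
/- Let Q be a very degenerate quintic algebra over a field K, i.e., there are subspaces Q₃ ⊆ Q₄ ⊆ Q with dim Q₃ = 3, dim Q₄ = 4, and Q₄Q₃ = 0. Then Q admits a basis (1, α, β, γ, δ) over K such that all pairwise products among {α, β, γ, δ} vanish except possibly α², i.e., αβ = αγ = αδ = β² = βγ = βδ = γ² = γδ = δ² = 0. -/
/-- A very degenerate quintic algebra `Q` over a field `K` (there are
subspaces `Q₃ ⊆ Q₄ ⊆ Q` with `dim Q₃ = 3`, `dim Q₄ = 4`, `Q₄Q₃ = 0`) admits a basis
`(1, α, β, γ, δ)` over `K` in which all pairwise products among `{α, β, γ, δ}`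
vanish except possibly `α²`. -/
theorem stmt_11 (K : Type*) [Field K] (Q : Type*) [CommRing Q] [Algebra K Q]
    (hdim : Module.finrank K Q = 5)
    (Q₃ Q₄ : Submodule K Q) (hle : Q₃ ≤ Q₄)
    (h3 : Module.finrank K Q₃ = 3) (h4 : Module.finrank K Q₄ = 4)
    (hzero : ∀ x ∈ Q₄, ∀ y ∈ Q₃, x * y = 0) :
    ∃ α β γ δ : Q,
      (LinearIndependent K ![(1 : Q), α, β, γ, δ] ∧
        Submodule.span K {(1 : Q), α, β, γ, δ} = ⊤) ∧
      α * β = 0 ∧ α * γ = 0 ∧ α * δ = 0 ∧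
      β * β = 0 ∧ β * γ = 0 ∧ β * δ = 0 ∧
      γ * γ = 0 ∧ γ * δ = 0 ∧ δ * δ = 0 := by
  have hFD : FiniteDimensional K Q := FiniteDimensional.of_finrank_pos (by omega)
  -- basis of Q₃
  have b3 : Module.Basis (Fin 3) K Q₃ := Module.finBasisOfFinrankEq K Q₃ h3
  set v : Fin 3 → Q := fun i => (b3 i : Q) with hv
  have hvmem : ∀ i, v i ∈ Q₃ := fun i => (b3 i).2
  have hvli : LinearIndependent K v :=
    b3.linearIndependent.map' Q₃.subtype (Submodule.ker_subtype Q₃)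
  have hvspan : Submodule.span K (Set.range v) = Q₃ := by
    have : Set.range v = Q₃.subtype '' Set.range b3 := by
      ext x; simp [hv]
    rw [this, Submodule.span_image, b3.span_eq, Submodule.map_subtype_top]
  -- α ∈ Q₄ \ Q₃
  have hlt : Q₃ < Q₄ := lt_of_le_of_ne hle (by rintro rfl; rw [h3] at h4; omega)
  obtain ⟨α, hα4, hα3⟩ := SetLike.exists_of_lt hlt
  -- 1 ∉ Q₄
  have h1 : (1 : Q) ∉ Q₄ := by
    intro h1
    have := hzero 1 h1 (v 0) (hvmem 0)
    rw [one_mul] at this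
    exact b3.ne_zero 0 (Submodule.coe_eq_zero.mp this)
  have hli4 : LinearIndependent K (Fin.cons α v) := by
    refine hvli.fin_cons ?_
    rw [hvspan]; exact hα3
  have hspan4 : Submodule.span K (Set.range (Fin.cons α v)) ≤ Q₄ := by
    rw [Submodule.span_le]
    rintro x ⟨i, rfl⟩
    refine Fin.cases ?_ ?_ i
    · exact hα4
    · intro j; exact hle (hvmem j)
  have hli5 : LinearIndependent K (Fin.cons (1 : Q) (Fin.cons α v)) := by
    refine hli4.fin_cons ?_
    intro hmem
    exact h1 (hspan4 hmem)
  have heq : ![(1 : Q), α, v 0, v 1, v 2] = Fin.cons (1 : Q) (Fin.cons α v) := by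
    funext i
    fin_cases i <;> rfl
  refine ⟨α, v 0, v 1, v 2, ⟨?_, ?_⟩, ?_, ?_, ?_, ?_, ?_, ?_, ?_, ?_, ?_⟩
  · rw [heq]; exact hli5
  · have : Submodule.span K {(1:Q), α, v 0, v 1, v 2} =
        Submodule.span K (Set.range ![(1 : Q), α, v 0, v 1, v 2]) := by
      congr 1
      ext x
      simp [Matrix.range_cons, Matrix.range_empty]
      tauto
    rw [this, heq]
    refine hli5.span_eq_top_of_card_eq_finrank ?_
    simp [hdim]
  · exact hzero α hα4 (v 0) (hvmem 0)
  · exact hzero α hα4 (v 1) (hvmem 1)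
  · exact hzero α hα4 (v 2) (hvmem 2)
  · exact hzero (v 0) (hle (hvmem 0)) (v 0) (hvmem 0)
  · exact hzero (v 0) (hle (hvmem 0)) (v 1) (hvmem 1)
  · exact hzero (v 0) (hle (hvmem 0)) (v 2) (hvmem 2)
  · exact hzero (v 1) (hle (hvmem 1)) (v 1) (hvmem 1)
  · exact hzero (v 1) (hle (hvmem 1)) (v 2) (hvmem 2)
  · exact hzero (v 2) (hle (hvmem 2)) (v 2) (hvmem 2)
end

section
/- Let R be a DVR with maximal ideal 𝔭 = (π), and let Q be a quintic R-algebra possessing an R-basis (1, x, ε₁, ε₂, ε₃) with the property that all products of elements of (x, ε₁, ε₂, ε₃) with elements of (ε₁, ε₂, ε₃) lie in πQ. Set M = ⟨π, x, ε₁, ε₂, ε₃⟩ and N = ⟨π, πx, ε₁, ε₂, ε₃⟩ (R-submodules of Q). Then N² ⊆ πM. -/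
open Pointwise

private lemma stmt15_mem_smul_iff {R : Type*} [CommRing R] (π : R) {Q : Type*} [CommRing Q]
    [Algebra R Q] (S : Submodule R Q) (x : Q) :
    x ∈ Ideal.span {π} • S ↔ ∃ m ∈ S, x = π • m := by
  rw [Submodule.ideal_span_singleton_smul]
  constructor
  · rintro ⟨m, hm, rfl⟩; exact ⟨m, hm, rfl⟩
  · rintro ⟨m, hm, rfl⟩; exact Submodule.smul_mem_pointwise_smul m π S hm


/-- Let `R` be a DVR with uniformizer `π`, and `Q` a quintic
`R`-algebra with basis `(1, x, ε₁, ε₂, ε₃)` such that all products of elements of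
`(x, ε₁, ε₂, ε₃)` with elements of `(ε₁, ε₂, ε₃)` lie in `πQ`. With
`M = ⟨π, x, ε₁, ε₂, ε₃⟩` and `N = ⟨π, πx, ε₁, ε₂, ε₃⟩`, one has `N² ⊆ πM`. -/
theorem stmt_15 (R : Type*) [CommRing R] [IsDomain R] [IsDiscreteValuationRing R]
    (π : R) (hπ : Irreducible π)
    (Q : Type*) [CommRing Q] [Algebra R Q]
    (b : Module.Basis (Fin 5) R Q) (hb0 : b 0 = 1)
    (hdeg : ∀ i ∈ ({1, 2, 3, 4} : Finset (Fin 5)), ∀ j ∈ ({2, 3, 4} : Finset (Fin 5)),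
      b i * b j ∈ Ideal.span {π} • (⊤ : Submodule R Q))
    (M N : Submodule R Q)
    (hM : M = Submodule.span R {algebraMap R Q π, b 1, b 2, b 3, b 4})
    (hN : N = Submodule.span R {algebraMap R Q π, (algebraMap R Q π) * b 1, b 2, b 3, b 4}) :
    ∀ u ∈ N, ∀ v ∈ N, u * v ∈ Ideal.span {π} • M := by
  haveI : Module.IsTorsionFree R Q := b.isTorsionFree
  set π' : Q := algebraMap R Q π with hπ'
  have hsm : ∀ y : Q, π' * y = π • y := fun y => (Algebra.smul_def π y).symm
  -- membership of basis elements in M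
  have hbM : ∀ k : Fin 5, k ≠ 0 → b k ∈ M := by
    intro k hk
    rw [hM]
    apply Submodule.subset_span
    fin_cases k
    · exact absurd rfl hk
    · exact Or.inr (Or.inl rfl)
    · exact Or.inr (Or.inr (Or.inl rfl))
    · exact Or.inr (Or.inr (Or.inr (Or.inl rfl)))
    · exact Or.inr (Or.inr (Or.inr (Or.inr rfl)))
  have hπ'M : π' ∈ M := hM ▸ Submodule.subset_span (Or.inl rfl)
  have hπb : ∀ k : Fin 5, π • b k ∈ M := by
    intro k
    by_cases hk : k = 0
    · subst hk; rw [hb0, ← hsm, mul_one]; exact hπ'M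
    · exact M.smul_mem π (hbM k hk)
  -- πQ ⊆ M
  have hπQ_M : ∀ q : Q, π • q ∈ M := by
    intro q
    rw [← b.sum_repr q, Finset.smul_sum]
    apply Submodule.sum_mem
    intro k _
    rw [smul_comm]
    exact M.smul_mem _ (hπb k)
  -- hypothesis hdeg as existence
  have hdeg' : ∀ i ∈ ({1, 2, 3, 4} : Finset (Fin 5)), ∀ j ∈ ({2, 3, 4} : Finset (Fin 5)),
      ∃ w : Q, b i * b j = π • w := by
    intro i hi j hj
    obtain ⟨w, -, hw⟩ := (stmt15_mem_smul_iff π ⊤ _).mp (hdeg i hi j hj)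
    exact ⟨w, hw⟩
  have hsub : ∀ i : Fin 5, i ∈ ({2, 3, 4} : Finset (Fin 5)) →
      i ∈ ({1, 2, 3, 4} : Finset (Fin 5)) := by decide
  -- expansion: for j ∈ {2,3,4}, z * b j ≡ (repr z 0) • b j mod πQ
  have expand : ∀ (z : Q), ∀ j ∈ ({2, 3, 4} : Finset (Fin 5)),
      ∃ w : Q, z * b j = (b.repr z 0) • b j + π • w := by
    intro z j hj
    have hmem : z * b j - (b.repr z 0) • b j ∈ Ideal.span {π} • (⊤ : Submodule R Q) := by
      have hz : z * b j = ∑ k : Fin 5, (b.repr z k) • (b k * b j) := by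
        conv_lhs => rw [← b.sum_repr z]
        rw [Finset.sum_mul]
        exact Finset.sum_congr rfl fun k _ => smul_mul_assoc _ _ _
      rw [hz, Fin.sum_univ_five]
      have h0 : (b.repr z 0) • (b 0 * b j) = (b.repr z 0) • b j := by rw [hb0, one_mul]
      rw [h0]
      have : (b.repr z 0) • b j + b.repr z 1 • (b 1 * b j) + b.repr z 2 • (b 2 * b j) +
          b.repr z 3 • (b 3 * b j) + b.repr z 4 • (b 4 * b j) - (b.repr z 0) • b j =
          b.repr z 1 • (b 1 * b j) + b.repr z 2 • (b 2 * b j) +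
          b.repr z 3 • (b 3 * b j) + b.repr z 4 • (b 4 * b j) := by ring
      rw [this]
      have t1 := Submodule.smul_mem _ (b.repr z 1) (hdeg 1 (by decide) j hj)
      have t2 := Submodule.smul_mem _ (b.repr z 2) (hdeg 2 (by decide) j hj)
      have t3 := Submodule.smul_mem _ (b.repr z 3) (hdeg 3 (by decide) j hj)
      have t4 := Submodule.smul_mem _ (b.repr z 4) (hdeg 4 (by decide) j hj)
      exact Submodule.add_mem _ (Submodule.add_mem _ (Submodule.add_mem _ t1 t2) t3) t4
    obtain ⟨w, -, hw⟩ := (stmt15_mem_smul_iff π ⊤ _).mp hmem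
    exact ⟨w, by linear_combination hw⟩
  -- key divisibility lemma
  have key : ∀ i ∈ ({2, 3, 4} : Finset (Fin 5)), ∀ j ∈ ({2, 3, 4} : Finset (Fin 5)), i ≠ j →
      ∀ q q' : Q, b i * b j = π • q → b j * b j = π • q' →
      π ∣ b.repr q 0 ∧ π ∣ b.repr q' 0 := by
    intro i hi j hj hij q q' hq hq'
    have hcancel : Function.Injective (fun y : Q => π • y) :=
      smul_right_injective Q hπ.ne_zero
    have h1 : π • (q * b j) = π • (b i * q') := by
      calc π • (q * b j) = (π • q) * b j := (smul_mul_assoc π q (b j)).symm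
        _ = (b i * b j) * b j := by rw [hq]
        _ = b i * (b j * b j) := mul_assoc _ _ _
        _ = b i * (π • q') := by rw [hq']
        _ = π • (b i * q') := (mul_smul_comm π _ _)
    have heq : q * b j = b i * q' := hcancel h1
    obtain ⟨w, hw⟩ := expand q j hj
    obtain ⟨w', hw'⟩ := expand q' i hi
    have hw'' : b i * q' = (b.repr q' 0) • b i + π • w' := by rw [mul_comm]; exact hw'
    have hEq : (b.repr q 0) • b j - (b.repr q' 0) • b i = π • (w' - w) := by
      have := heq
      rw [hw, hw''] at this
      rw [smul_sub]
      linear_combination this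
    constructor
    · have := congrArg (fun z => b.repr z j) hEq
      simp only [map_sub, map_smul, Finsupp.smul_apply, Finsupp.sub_apply,
        b.repr_self_apply, smul_eq_mul] at this
      simp only [if_true, if_neg hij, mul_one, mul_zero, sub_zero] at this
      exact ⟨(b.repr w') j - (b.repr w) j, this⟩
    · have := congrArg (fun z => b.repr z i) hEq
      simp only [map_sub, map_smul, Finsupp.smul_apply, Finsupp.sub_apply,
        b.repr_self_apply, smul_eq_mul] at this
      simp only [if_true, if_neg (Ne.symm hij), mul_one, mul_zero, zero_sub] at this
      refine (dvd_neg.mp ⟨(b.repr w') i - (b.repr w) i, ?_⟩)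
      linear_combination this
  -- lemma C
  have hC : ∀ q : Q, π ∣ b.repr q 0 → π • q ∈ Ideal.span {π} • M := by
    intro q ⟨d, hd⟩
    refine Submodule.smul_mem_smul (Ideal.mem_span_singleton_self π) ?_
    rw [← b.sum_repr q]
    apply Submodule.sum_mem
    intro k _
    by_cases hk : k = 0
    · subst hk
      rw [hd, mul_comm, mul_smul]
      exact M.smul_mem d (hπb 0)
    · exact M.smul_mem _ (hbM k hk)
  -- hard case : b i * b j ∈ πM for i, j ∈ {2,3,4}
  have hard : ∀ i ∈ ({2, 3, 4} : Finset (Fin 5)), ∀ j ∈ ({2, 3, 4} : Finset (Fin 5)),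
      b i * b j ∈ Ideal.span {π} • M := by
    intro i hi j hj
    obtain ⟨q, hq⟩ := hdeg' i (hsub i hi) j hj
    by_cases hij : i = j
    · subst hij
      have hex : ∃ k ∈ ({2, 3, 4} : Finset (Fin 5)), k ≠ i := by
        fin_cases hi
        · exact ⟨3, by decide, by decide⟩
        · exact ⟨2, by decide, by decide⟩
        · exact ⟨2, by decide, by decide⟩
      obtain ⟨k, hk, hki⟩ := hex
      obtain ⟨q'', hq''⟩ := hdeg' k (hsub k hk) i hi
      have := (key k hk i hi hki q'' q hq'' hq).2
      rw [hq]; exact hC q this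
    · obtain ⟨q', hq'⟩ := hdeg' j (hsub j hj) j hj
      have := (key i hi j hj hij q q' hq hq').1
      rw [hq]; exact hC q this
  -- generator set of N
  intro u hu v hv
  rw [hN] at hu hv
  have hSM : ∀ g ∈ ({π', π' * b 1, b 2, b 3, b 4} : Set Q), g ∈ M := by
    rintro g (rfl | rfl | rfl | rfl | rfl)
    · exact hπ'M
    · rw [hsm]; exact M.smul_mem π (hbM 1 (by decide))
    · exact hbM 2 (by decide)
    · exact hbM 3 (by decide)
    · exact hbM 4 (by decide)
  have case1 : ∀ y ∈ M, π' * y ∈ Ideal.span {π} • M := by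
    intro y hy
    rw [hsm]
    exact Submodule.smul_mem_smul (Ideal.mem_span_singleton_self π) hy
  have hb1S : ∀ y ∈ ({π', π' * b 1, b 2, b 3, b 4} : Set Q), b 1 * y ∈ M := by
    rintro y (rfl | rfl | rfl | rfl | rfl)
    · rw [mul_comm, hsm]; exact M.smul_mem π (hbM 1 (by decide))
    · rw [hsm, mul_smul_comm]; exact hπQ_M _
    · obtain ⟨w, hw⟩ := hdeg' 1 (by decide) 2 (by decide); rw [hw]; exact hπQ_M w
    · obtain ⟨w, hw⟩ := hdeg' 1 (by decide) 3 (by decide); rw [hw]; exact hπQ_M w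
    · obtain ⟨w, hw⟩ := hdeg' 1 (by decide) 4 (by decide); rw [hw]; exact hπQ_M w
  have case2 : ∀ y ∈ ({π', π' * b 1, b 2, b 3, b 4} : Set Q), (π' * b 1) * y ∈
      Ideal.span {π} • M := by
    intro y hy
    rw [hsm, smul_mul_assoc]
    exact Submodule.smul_mem_smul (Ideal.mem_span_singleton_self π) (hb1S y hy)
  induction hu, hv using Submodule.span_induction₂ with
  | mem_mem x y hx hy =>
    rcases hx with rfl | rfl | hx2
    · exact case1 y (Submodule.span_le.mpr (fun g hg => hSM g hg) (Submodule.subset_span hy))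
    · exact case2 y hy
    · rcases hy with rfl | rfl | hy2
      · rw [mul_comm]
        exact case1 x (hSM x (Or.inr (Or.inr hx2)))
      · rw [mul_comm]
        exact case2 x (Or.inr (Or.inr hx2))
      · rcases hx2 with rfl | rfl | rfl <;> rcases hy2 with rfl | rfl | rfl
        · exact hard 2 (by decide) 2 (by decide)
        · exact hard 2 (by decide) 3 (by decide)
        · exact hard 2 (by decide) 4 (by decide)
        · exact hard 3 (by decide) 2 (by decide)
        · exact hard 3 (by decide) 3 (by decide)
        · exact hard 3 (by decide) 4 (by decide)
        · exact hard 4 (by decide) 2 (by decide)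
        · exact hard 4 (by decide) 3 (by decide)
        · exact hard 4 (by decide) 4 (by decide)
  | zero_left y hy => rw [zero_mul]; exact Submodule.zero_mem _
  | zero_right x hx => rw [mul_zero]; exact Submodule.zero_mem _
  | add_left x y z hx hy hz h1 h2 => rw [add_mul]; exact Submodule.add_mem _ h1 h2
  | add_right x y z hx hy hz h1 h2 => rw [mul_add]; exact Submodule.add_mem _ h1 h2
  | smul_left r x y hx hy h => rw [smul_mul_assoc]; exact Submodule.smul_mem _ r h
  | smul_right r x y hx hy h => rw [mul_smul_comm]; exact Submodule.smul_mem _ r h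
end

section
/- Let R be a DVR with uniformizer π, and Q a quintic R-algebra with R-basis (1, x, ε₁, ε₂, ε₃) such that (x,ε₁,ε₂,ε₃)·(ε₁,ε₂,ε₃) ⊆ πQ. With N = ⟨π, πx, ε₁, ε₂, ε₃⟩ and M = ⟨π, x, ε₁, ε₂, ε₃⟩, if additionally N² ⊆ πN, then π⁻¹N (inside Q ⊗ Frac(R)) is a ring, i.e., a quintic R-algebra strictly containing Q; hence Q is not maximal. -/
open TensorProduct

set_option synthInstance.maxHeartbeats 1000000
set_option maxHeartbeats 1000000
set_option maxHeartbeats 4000000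

open Pointwise in
lemma aux_mem_ideal_span_smul {R M : Type*} [CommRing R] [AddCommGroup M] [Module R M]
    (r : R) (N : Submodule R M) (x : M) (h : x ∈ Ideal.span {r} • N) :
    ∃ w ∈ N, r • w = x := by
  rw [Submodule.ideal_span_singleton_smul] at h
  have h' : x ∈ r • (N : Set M) := by rw [← Submodule.coe_pointwise_smul]; exact h
  exact Set.mem_smul_set.mp h'


section Aux

variable {R Q : Type*} [CommRing R] [IsDomain R] [CommRing Q] [Algebra R Q]

/-- Auxiliary subalgebra `{y | c * y ∈ N'}`. -/
def auxT (c : FractionRing R ⊗[R] Q) (N' : Submodule R (FractionRing R ⊗[R] Q))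
    (h1 : c * 1 ∈ N')
    (halg : ∀ r : R, c * algebraMap R (FractionRing R ⊗[R] Q) r ∈ N')
    (hmul : ∀ a b : FractionRing R ⊗[R] Q, c * a ∈ N' → c * b ∈ N' → c * (a * b) ∈ N') :
    Subalgebra R (FractionRing R ⊗[R] Q) where
  carrier := {y | c * y ∈ N'}
  zero_mem' := by
    simp only [Set.mem_setOf_eq, mul_zero]
    exact N'.zero_mem
  one_mem' := h1
  add_mem' := by
    intro a b ha hb
    simp only [Set.mem_setOf_eq, mul_add] at *
    exact N'.add_mem ha hb
  mul_mem' := fun {a b} ha hb => hmul a b ha hb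
  algebraMap_mem' := halg

/-- `N'` is linearly equivalent to `auxT c N' _ _ _` when `c` is a unit, via `n ↦ c⁻¹ * n`. -/
noncomputable def auxEquiv (c : FractionRing R ⊗[R] Q) (hc : IsUnit c)
    (N' : Submodule R (FractionRing R ⊗[R] Q))
    (h1 : c * 1 ∈ N')
    (halg : ∀ r : R, c * algebraMap R (FractionRing R ⊗[R] Q) r ∈ N')
    (hmul : ∀ a b : FractionRing R ⊗[R] Q, c * a ∈ N' → c * b ∈ N' → c * (a * b) ∈ N') :
    N' ≃ₗ[R] auxT c N' h1 halg hmul where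
  toFun n := ⟨↑hc.unit⁻¹ * ↑n, by
    show c * (↑hc.unit⁻¹ * ↑n) ∈ N'
    rw [← mul_assoc, IsUnit.mul_val_inv, one_mul]
    exact n.2⟩
  invFun t := ⟨c * ↑t, t.2⟩
  map_add' n m := Subtype.ext (by
    show (↑hc.unit⁻¹ : FractionRing R ⊗[R] Q) * ↑(n + m) = ↑hc.unit⁻¹ * ↑n + ↑hc.unit⁻¹ * ↑m
    rw [Submodule.coe_add, mul_add])
  map_smul' r n := Subtype.ext (by
    show (↑hc.unit⁻¹ : FractionRing R ⊗[R] Q) * ↑(r • n) =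
      r • ((↑hc.unit⁻¹ : FractionRing R ⊗[R] Q) * ↑n)
    rw [Submodule.coe_smul, mul_smul_comm])
  left_inv n := Subtype.ext (by
    show c * (↑hc.unit⁻¹ * ↑n) = ↑n
    rw [← mul_assoc, IsUnit.mul_val_inv, one_mul])
  right_inv t := Subtype.ext (by
    show (↑hc.unit⁻¹ : FractionRing R ⊗[R] Q) * (c * ↑t) = ↑t
    rw [← mul_assoc, IsUnit.val_inv_mul, one_mul])

end Aux

/-- Let `R` be a DVR with uniformizer `π` and `Q` a quintic
`R`-algebra with basis `(1, x, ε₁, ε₂, ε₃)` such that `(x,ε₁,ε₂,ε₃)·(ε₁,ε₂,ε₃) ⊆ πQ`.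
With `N = ⟨π, πx, ε₁, ε₂, ε₃⟩`, if moreover `N² ⊆ πN`, then `π⁻¹N` (inside
`Q ⊗ Frac(R)`) is a ring: it is (the underlying set of) an `R`-subalgebra of
`Frac(R) ⊗ Q`, free of rank 5 as an `R`-module, strictly containing the image of
`Q`; hence `Q` is not maximal. -/
theorem stmt_16 (R : Type*) [CommRing R] [IsDomain R] [IsDiscreteValuationRing R]
    (π : R) (hπ : Irreducible π)
    (Q : Type*) [CommRing Q] [Algebra R Q]
    (b : Module.Basis (Fin 5) R Q) (hb0 : b 0 = 1)
    (hdeg : ∀ i ∈ ({1, 2, 3, 4} : Finset (Fin 5)), ∀ j ∈ ({2, 3, 4} : Finset (Fin 5)),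
      b i * b j ∈ Ideal.span {π} • (⊤ : Submodule R Q))
    (N : Submodule R Q)
    (hN : N = Submodule.span R {algebraMap R Q π, (algebraMap R Q π) * b 1, b 2, b 3, b 4})
    (hN2 : ∀ u ∈ N, ∀ v ∈ N, u * v ∈ Ideal.span {π} • N) :
    ∃ T : Subalgebra R (FractionRing R ⊗[R] Q),
      (T : Set (FractionRing R ⊗[R] Q)) =
        {y : FractionRing R ⊗[R] Q |
          algebraMap R (FractionRing R ⊗[R] Q) π * y ∈
            N.map (Algebra.TensorProduct.includeRight :
              Q →ₐ[R] FractionRing R ⊗[R] Q).toLinearMap} ∧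
      Set.range (Algebra.TensorProduct.includeRight :
          Q →ₐ[R] FractionRing R ⊗[R] Q) ⊂ (T : Set (FractionRing R ⊗[R] Q)) ∧
      Module.Finite R T ∧ Module.Free R T ∧ Module.finrank R T = 5 := by
  classical
  set incl := (Algebra.TensorProduct.includeRight : Q →ₐ[R] (FractionRing R) ⊗[R] Q) with hincl
  set c := algebraMap R ((FractionRing R) ⊗[R] Q) π with hc
  -- injectivity of includeRight
  have hinclapp : ∀ q : Q, incl q = (1 : (FractionRing R)) ⊗ₜ[R] q := fun q => rfl
  have hinj : Function.Injective incl := by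
    intro q q' h
    apply b.repr.injective
    ext i
    have h1 : (b.baseChange (FractionRing R)).repr (incl q) i = (b.baseChange (FractionRing R)).repr (incl q') i := by rw [h]
    rw [hinclapp, hinclapp, Module.Basis.baseChange_repr_tmul, Module.Basis.baseChange_repr_tmul,
      ← Algebra.algebraMap_eq_smul_one, ← Algebra.algebraMap_eq_smul_one] at h1
    exact IsFractionRing.injective R (FractionRing R) h1
  -- c is a unit
  have hπK : algebraMap R (FractionRing R) π ≠ 0 := by
    refine fun h => hπ.ne_zero (IsFractionRing.injective R (FractionRing R) ?_)
    rw [h, map_zero]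
  have hcu : IsUnit c := by
    rw [hc, IsScalarTower.algebraMap_apply R (FractionRing R) ((FractionRing R) ⊗[R] Q)]
    exact (isUnit_iff_ne_zero.mpr hπK).map (algebraMap (FractionRing R) ((FractionRing R) ⊗[R] Q))
  set u := hcu.unit with hu'
  have hu : (↑u : (FractionRing R) ⊗[R] Q) = c := hcu.unit_spec
  have hcancel : ∀ a b : (FractionRing R) ⊗[R] Q, c * a = c * b → a = b := by
    intro a b h
    rw [← hu] at h
    exact (u.mul_right_inj).mp h
  have hcuinv : c * ↑u⁻¹ = 1 := by rw [← hu]; exact u.mul_inv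
  have huinvc : (↑u⁻¹ : (FractionRing R) ⊗[R] Q) * c = 1 := by rw [← hu]; exact u.inv_mul
  -- basic N membership facts
  have hπN : algebraMap R Q π ∈ N := by
    rw [hN]; exact Submodule.subset_span (Set.mem_insert _ _)
  have hb2N : b 2 ∈ N := by
    rw [hN]; exact Submodule.subset_span (by simp)
  have hbiN : ∀ i : Fin 5, π • b i ∈ N := by
    intro i
    fin_cases i
    · show π • b 0 ∈ N
      rw [hb0, ← Algebra.algebraMap_eq_smul_one]
      exact hπN
    · show π • b 1 ∈ N
      rw [Algebra.smul_def]
      rw [hN]; exact Submodule.subset_span (by simp)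
    · exact Submodule.smul_mem _ _ hb2N
    · exact Submodule.smul_mem _ _ (by rw [hN]; exact Submodule.subset_span (by simp))
    · exact Submodule.smul_mem _ _ (by rw [hN]; exact Submodule.subset_span (by simp))
  have hπQ : ∀ q : Q, π • q ∈ N := by
    intro q
    have hq := Module.Basis.sum_repr b q
    rw [← hq, Finset.smul_sum]
    refine Submodule.sum_mem _ fun i _ => ?_
    rw [smul_comm]
    exact Submodule.smul_mem _ _ (hbiN i)
  -- the subalgebra
  set N' := N.map incl.toLinearMap with hN'
  have h1 : c * 1 ∈ N' := by
    rw [mul_one]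
    exact Submodule.mem_map.mpr ⟨algebraMap R Q π, hπN, incl.commutes π⟩
  have halg : ∀ r : R, c * algebraMap R ((FractionRing R) ⊗[R] Q) r ∈ N' := by
    intro r
    refine Submodule.mem_map.mpr ⟨r • algebraMap R Q π, Submodule.smul_mem _ _ hπN, ?_⟩
    rw [AlgHom.toLinearMap_apply, map_smul, incl.commutes, Algebra.smul_def]
    exact mul_comm _ _
  have hmul : ∀ a a' : (FractionRing R) ⊗[R] Q, c * a ∈ N' → c * a' ∈ N' → c * (a * a') ∈ N' := by
    intro a a' ha ha'
    obtain ⟨n, hnN, hn⟩ := Submodule.mem_map.mp ha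
    obtain ⟨m, hmN, hm⟩ := Submodule.mem_map.mp ha'
    obtain ⟨w, hwN, hw⟩ := aux_mem_ideal_span_smul π N _ (hN2 n hnN m hmN)
    refine Submodule.mem_map.mpr ⟨w, hwN, ?_⟩
    refine hcancel _ _ ?_
    have e1 : incl (n * m) = (c * a) * (c * a') := by
      rw [map_mul]
      rw [AlgHom.toLinearMap_apply] at hn hm
      rw [hn, hm]
    calc c * (incl.toLinearMap w) = incl (π • w) := by
          rw [AlgHom.toLinearMap_apply, map_smul, Algebra.smul_def]
      _ = (c * a) * (c * a') := by rw [hw, e1]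
      _ = c * (c * (a * a')) := by ring
  set T : Subalgebra R ((FractionRing R) ⊗[R] Q) := auxT c N' h1 halg hmul with hT
  -- strict inclusion
  have hsub : Set.range incl ⊆ (T : Set ((FractionRing R) ⊗[R] Q)) := by
    rintro _ ⟨q, rfl⟩
    show c * incl q ∈ N'
    exact Submodule.mem_map.mpr ⟨π • q, hπQ q, by
      rw [AlgHom.toLinearMap_apply, map_smul, Algebra.smul_def]⟩
  have hw0T : ((↑u⁻¹ : (FractionRing R) ⊗[R] Q) * incl (b 2)) ∈ (T : Set ((FractionRing R) ⊗[R] Q)) := by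
    show c * ((↑u⁻¹ : (FractionRing R) ⊗[R] Q) * incl (b 2)) ∈ N'
    exact Submodule.mem_map.mpr ⟨b 2, hb2N, by
      rw [AlgHom.toLinearMap_apply, ← mul_assoc, hcuinv, one_mul]⟩
  have hnotin : ((↑u⁻¹ : (FractionRing R) ⊗[R] Q) * incl (b 2)) ∉ Set.range incl := by
    rintro ⟨q, hq⟩
    have h1 : incl (π • q) = incl (b 2) := by
      rw [map_smul, Algebra.smul_def, ← hc, hq, ← mul_assoc, hcuinv, one_mul]
    have h2 : π • q = b 2 := hinj h1
    have h3 := congrArg (fun z => b.repr z 2) h2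
    simp only [map_smul, Finsupp.smul_apply, smul_eq_mul, Module.Basis.repr_self,
      Finsupp.single_eq_same] at h3
    exact hπ.not_isUnit (IsUnit.of_mul_eq_one _ h3)
  have hss : Set.range incl ⊂ (T : Set ((FractionRing R) ⊗[R] Q)) :=
    (Set.ssubset_iff_of_subset hsub).mpr ⟨_, hw0T, hnotin⟩
  -- basis of N
  let cf : Fin 5 → R := ![π, π, 1, 1, 1]
  let v : Fin 5 → Q := fun i => cf i • b i
  have hvli : LinearIndependent R v := by
    rw [Fintype.linearIndependent_iff]
    intro g hg i
    have hb' : ∀ j, g j * cf j = 0 := by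
      apply Fintype.linearIndependent_iff.mp b.linearIndependent
      rw [← hg]
      exact Finset.sum_congr rfl fun j _ => mul_smul (g j) (cf j) (b j)
    have hcne : cf i ≠ 0 := by
      fin_cases i <;> simp [cf, hπ.ne_zero]
    exact (mul_eq_zero.mp (hb' i)).resolve_right hcne
  have e0 : v 0 = algebraMap R Q π := by
    show π • b 0 = _
    rw [hb0, ← Algebra.algebraMap_eq_smul_one]
  have e1 : v 1 = algebraMap R Q π * b 1 := by
    show π • b 1 = _
    rw [Algebra.smul_def]
  have e2 : v 2 = b 2 := one_smul R (b 2)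
  have e3 : v 3 = b 3 := one_smul R (b 3)
  have e4 : v 4 = b 4 := one_smul R (b 4)
  have hrange : Set.range v = {algebraMap R Q π, (algebraMap R Q π) * b 1, b 2, b 3, b 4} := by
    ext y
    simp only [Set.mem_insert_iff, Set.mem_singleton_iff]
    constructor
    · rintro ⟨i, rfl⟩
      fin_cases i
      · exact Or.inl e0
      · exact Or.inr (Or.inl e1)
      · exact Or.inr (Or.inr (Or.inl e2))
      · exact Or.inr (Or.inr (Or.inr (Or.inl e3)))
      · exact Or.inr (Or.inr (Or.inr (Or.inr e4)))
    · rintro (rfl | rfl | rfl | rfl | rfl)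
      exacts [⟨0, e0⟩, ⟨1, e1⟩, ⟨2, e2⟩, ⟨3, e3⟩, ⟨4, e4⟩]
  have hNspan : N = Submodule.span R (Set.range v) := by rw [hN, ← hrange]
  let bN : Module.Basis (Fin 5) R N := (Module.Basis.span hvli).map (LinearEquiv.ofEq _ _ hNspan.symm)
  -- linear equivalence N ≃ T
  have hinj' : Function.Injective incl.toLinearMap := hinj
  let e : N ≃ₗ[R] T :=
    (Submodule.equivMapOfInjective incl.toLinearMap hinj' N).trans
      (auxEquiv c hcu N' h1 halg hmul)
  let bT : Module.Basis (Fin 5) R T := bN.map e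
  refine ⟨T, rfl, hss, ?_, ?_, ?_⟩
  · exact Module.Finite.of_basis bT
  · exact Module.Free.of_basis bT
  · exact (Module.finrank_eq_card_basis bT).trans (Fintype.card_fin 5)
end

section
/- Let K be a field of characteristic not 2, and let M be the 5-dimensional K-vector space with basis f₁,…,f₅. The six vectors v_i = f_{i−2} − f_{i−1} + f_i − f_{i+1} + f_{i+2} for 1 ≤ i ≤ 5 (indices mod 5) together with v₆ = f₁ + f₂ + f₃ + f₄ + f₅ satisfy v₁ + v₂ + v₃ + v₄ + v₅ + v₆ = 2(f₁ + ⋯ + f₅), and any five of the six vectors v₁,…,v₆ form a basis of M. -/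
set_option maxRecDepth 100000
set_option maxHeartbeats 4000000

lemma aux_basis {K : Type*} [Field K] (w : Fin 5 → (Fin 5 → K))
    (hdet : (Matrix.of w).det ≠ 0) :
    LinearIndependent K w ∧ Submodule.span K (Set.range w) = ⊤ := by
  have hind : LinearIndependent K w := by
    have := Matrix.linearIndependent_rows_iff_isUnit (K := K) (A := Matrix.of w)
    rw [show (Matrix.of w).row = w from rfl] at this
    exact this.2 ((Matrix.isUnit_iff_isUnit_det _).2 (isUnit_iff_ne_zero.2 hdet))
  refine ⟨hind, ?_⟩
  have hcard : Fintype.card (Fin 5) = Module.finrank K (Fin 5 → K) := by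
    simp [Module.finrank_fin_fun]
  rw [← coe_basisOfLinearIndependentOfCardEqFinrank hind hcard]
  exact (basisOfLinearIndependentOfCardEqFinrank hind hcard).span_eq

/-- Let `K` be a field of characteristic ≠ 2 and `M = K⁵` with basis
`f₁,…,f₅`. The six vectors `vᵢ = f_{i−2} − f_{i−1} + fᵢ − f_{i+1} + f_{i+2}`
(`1 ≤ i ≤ 5`, indices mod 5) and `v₆ = f₁ + ⋯ + f₅` satisfy
`v₁ + ⋯ + v₆ = 2(f₁ + ⋯ + f₅)`, and any five of the six form a basis of `M`. -/
theorem stmt_18 (K : Type*) [Field K] (h2 : (2 : K) ≠ 0)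
    (f : Fin 5 → (Fin 5 → K)) (hf : ∀ i, f i = Pi.single i 1)
    (v : Fin 6 → (Fin 5 → K))
    (hv : ∀ i : Fin 5, v i.castSucc
      = f (i - 2) - f (i - 1) + f i - f (i + 1) + f (i + 2))
    (hv6 : v (Fin.last 5) = ∑ i, f i) :
    (∑ i, v i) = (2 : K) • (∑ i, f i) ∧
    ∀ j : Fin 6, LinearIndependent K (v ∘ j.succAbove) ∧
      Submodule.span K (Set.range (v ∘ j.succAbove)) = ⊤ := by
  have e0 : v 0 = ![1,-1,1,1,-1] := by
    have h := hv 0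
    rw [show ((0:Fin 5).castSucc : Fin 6) = 0 from rfl,
        show (0-2:Fin 5) = 3 from rfl, show (0-1:Fin 5) = 4 from rfl,
        show (0+1:Fin 5) = 1 from rfl, show (0+2:Fin 5) = 2 from rfl] at h
    rw [h]; funext k; fin_cases k <;> simp [hf, Pi.single_apply]
  have e1 : v 1 = ![-1,1,-1,1,1] := by
    have h := hv 1
    rw [show ((1:Fin 5).castSucc : Fin 6) = 1 from rfl,
        show (1-2:Fin 5) = 4 from rfl, show (1-1:Fin 5) = 0 from rfl,
        show (1+1:Fin 5) = 2 from rfl, show (1+2:Fin 5) = 3 from rfl] at h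
    rw [h]; funext k; fin_cases k <;> simp [hf, Pi.single_apply]
  have e2 : v 2 = ![1,-1,1,-1,1] := by
    have h := hv 2
    rw [show ((2:Fin 5).castSucc : Fin 6) = 2 from rfl,
        show (2-2:Fin 5) = 0 from rfl, show (2-1:Fin 5) = 1 from rfl,
        show (2+1:Fin 5) = 3 from rfl, show (2+2:Fin 5) = 4 from rfl] at h
    rw [h]; funext k; fin_cases k <;> simp [hf, Pi.single_apply]
  have e3 : v 3 = ![1,1,-1,1,-1] := by
    have h := hv 3
    rw [show ((3:Fin 5).castSucc : Fin 6) = 3 from rfl,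
        show (3-2:Fin 5) = 1 from rfl, show (3-1:Fin 5) = 2 from rfl,
        show (3+1:Fin 5) = 4 from rfl, show (3+2:Fin 5) = 0 from rfl] at h
    rw [h]; funext k; fin_cases k <;> simp [hf, Pi.single_apply]
  have e4 : v 4 = ![-1,1,1,-1,1] := by
    have h := hv 4
    rw [show ((4:Fin 5).castSucc : Fin 6) = 4 from rfl,
        show (4-2:Fin 5) = 2 from rfl, show (4-1:Fin 5) = 3 from rfl,
        show (4+1:Fin 5) = 0 from rfl, show (4+2:Fin 5) = 1 from rfl] at h
    rw [h]; funext k; fin_cases k <;> simp [hf, Pi.single_apply]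
  have e5 : v 5 = ![1,1,1,1,1] := by
    have h := hv6
    rw [show (Fin.last 5 : Fin 6) = 5 from rfl, Fin.sum_univ_five] at h
    rw [h]; funext k; fin_cases k <;> simp [hf, Pi.single_apply]
  have h16 : (16 : K) ≠ 0 := by
    have h4 := pow_ne_zero 4 h2
    intro h; apply h4; rw [show (2:K)^4 = 16 by norm_num, h]
  constructor
  · rw [Fin.sum_univ_six, Fin.sum_univ_five, e0, e1, e2, e3, e4, e5]
    funext k; fin_cases k <;> simp [hf, Pi.single_apply] <;> ring
  · intro j
    fin_cases j
    · refine aux_basis _ ?_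
      show (Matrix.of (v ∘ Fin.succAbove (0 : Fin 6))).det ≠ 0
      rw [show v ∘ Fin.succAbove (0 : Fin 6) = ![v 1, v 2, v 3, v 4, v 5] from by
        funext i; fin_cases i <;> rfl, e1, e2, e3, e4, e5]
      have hm : Matrix.of (![![-1,1,-1,1,1], ![1,-1,1,-1,1], ![1,1,-1,1,-1], ![-1,1,1,-1,1], ![1,1,1,1,1]] : Fin 5 → Fin 5 → K)
          = (Matrix.of (![![-1,1,-1,1,1],![1,-1,1,-1,1],![1,1,-1,1,-1],![-1,1,1,-1,1],![1,1,1,1,1]] : Fin 5 → Fin 5 → ℤ)).map ⇑(Int.castRingHom K) := by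
        funext i k; fin_cases i <;> fin_cases k <;> norm_num [Matrix.map_apply]
      rw [hm, ← RingHom.mapMatrix_apply, ← RingHom.map_det,
        show (Matrix.of (![![-1,1,-1,1,1],![1,-1,1,-1,1],![1,1,-1,1,-1],![-1,1,1,-1,1],![1,1,1,1,1]] : Fin 5 → Fin 5 → ℤ)).det = 16 from by decide]
      simpa using h16
    · refine aux_basis _ ?_
      show (Matrix.of (v ∘ Fin.succAbove (1 : Fin 6))).det ≠ 0
      rw [show v ∘ Fin.succAbove (1 : Fin 6) = ![v 0, v 2, v 3, v 4, v 5] from by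
        funext i; fin_cases i <;> rfl, e0, e2, e3, e4, e5]
      have hm : Matrix.of (![![1,-1,1,1,-1], ![1,-1,1,-1,1], ![1,1,-1,1,-1], ![-1,1,1,-1,1], ![1,1,1,1,1]] : Fin 5 → Fin 5 → K)
          = (Matrix.of (![![1,-1,1,1,-1],![1,-1,1,-1,1],![1,1,-1,1,-1],![-1,1,1,-1,1],![1,1,1,1,1]] : Fin 5 → Fin 5 → ℤ)).map ⇑(Int.castRingHom K) := by
        funext i k; fin_cases i <;> fin_cases k <;> norm_num [Matrix.map_apply]
      rw [hm, ← RingHom.mapMatrix_apply, ← RingHom.map_det,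
        show (Matrix.of (![![1,-1,1,1,-1],![1,-1,1,-1,1],![1,1,-1,1,-1],![-1,1,1,-1,1],![1,1,1,1,1]] : Fin 5 → Fin 5 → ℤ)).det = -16 from by decide]
      simpa using h16
    · refine aux_basis _ ?_
      show (Matrix.of (v ∘ Fin.succAbove (2 : Fin 6))).det ≠ 0
      rw [show v ∘ Fin.succAbove (2 : Fin 6) = ![v 0, v 1, v 3, v 4, v 5] from by
        funext i; fin_cases i <;> rfl, e0, e1, e3, e4, e5]
      have hm : Matrix.of (![![1,-1,1,1,-1], ![-1,1,-1,1,1], ![1,1,-1,1,-1], ![-1,1,1,-1,1], ![1,1,1,1,1]] : Fin 5 → Fin 5 → K)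
          = (Matrix.of (![![1,-1,1,1,-1],![-1,1,-1,1,1],![1,1,-1,1,-1],![-1,1,1,-1,1],![1,1,1,1,1]] : Fin 5 → Fin 5 → ℤ)).map ⇑(Int.castRingHom K) := by
        funext i k; fin_cases i <;> fin_cases k <;> norm_num [Matrix.map_apply]
      rw [hm, ← RingHom.mapMatrix_apply, ← RingHom.map_det,
        show (Matrix.of (![![1,-1,1,1,-1],![-1,1,-1,1,1],![1,1,-1,1,-1],![-1,1,1,-1,1],![1,1,1,1,1]] : Fin 5 → Fin 5 → ℤ)).det = 16 from by decide]
      simpa using h16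
    · refine aux_basis _ ?_
      show (Matrix.of (v ∘ Fin.succAbove (3 : Fin 6))).det ≠ 0
      rw [show v ∘ Fin.succAbove (3 : Fin 6) = ![v 0, v 1, v 2, v 4, v 5] from by
        funext i; fin_cases i <;> rfl, e0, e1, e2, e4, e5]
      have hm : Matrix.of (![![1,-1,1,1,-1], ![-1,1,-1,1,1], ![1,-1,1,-1,1], ![-1,1,1,-1,1], ![1,1,1,1,1]] : Fin 5 → Fin 5 → K)
          = (Matrix.of (![![1,-1,1,1,-1],![-1,1,-1,1,1],![1,-1,1,-1,1],![-1,1,1,-1,1],![1,1,1,1,1]] : Fin 5 → Fin 5 → ℤ)).map ⇑(Int.castRingHom K) := by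
        funext i k; fin_cases i <;> fin_cases k <;> norm_num [Matrix.map_apply]
      rw [hm, ← RingHom.mapMatrix_apply, ← RingHom.map_det,
        show (Matrix.of (![![1,-1,1,1,-1],![-1,1,-1,1,1],![1,-1,1,-1,1],![-1,1,1,-1,1],![1,1,1,1,1]] : Fin 5 → Fin 5 → ℤ)).det = -16 from by decide]
      simpa using h16
    · refine aux_basis _ ?_
      show (Matrix.of (v ∘ Fin.succAbove (4 : Fin 6))).det ≠ 0
      rw [show v ∘ Fin.succAbove (4 : Fin 6) = ![v 0, v 1, v 2, v 3, v 5] from by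
        funext i; fin_cases i <;> rfl, e0, e1, e2, e3, e5]
      have hm : Matrix.of (![![1,-1,1,1,-1], ![-1,1,-1,1,1], ![1,-1,1,-1,1], ![1,1,-1,1,-1], ![1,1,1,1,1]] : Fin 5 → Fin 5 → K)
          = (Matrix.of (![![1,-1,1,1,-1],![-1,1,-1,1,1],![1,-1,1,-1,1],![1,1,-1,1,-1],![1,1,1,1,1]] : Fin 5 → Fin 5 → ℤ)).map ⇑(Int.castRingHom K) := by
        funext i k; fin_cases i <;> fin_cases k <;> norm_num [Matrix.map_apply]
      rw [hm, ← RingHom.mapMatrix_apply, ← RingHom.map_det,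
        show (Matrix.of (![![1,-1,1,1,-1],![-1,1,-1,1,1],![1,-1,1,-1,1],![1,1,-1,1,-1],![1,1,1,1,1]] : Fin 5 → Fin 5 → ℤ)).det = 16 from by decide]
      simpa using h16
    · refine aux_basis _ ?_
      show (Matrix.of (v ∘ Fin.succAbove (5 : Fin 6))).det ≠ 0
      rw [show v ∘ Fin.succAbove (5 : Fin 6) = ![v 0, v 1, v 2, v 3, v 4] from by
        funext i; fin_cases i <;> rfl, e0, e1, e2, e3, e4]
      have hm : Matrix.of (![![1,-1,1,1,-1], ![-1,1,-1,1,1], ![1,-1,1,-1,1], ![1,1,-1,1,-1], ![-1,1,1,-1,1]] : Fin 5 → Fin 5 → K)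
          = (Matrix.of (![![1,-1,1,1,-1],![-1,1,-1,1,1],![1,-1,1,-1,1],![1,1,-1,1,-1],![-1,1,1,-1,1]] : Fin 5 → Fin 5 → ℤ)).map ⇑(Int.castRingHom K) := by
        funext i k; fin_cases i <;> fin_cases k <;> norm_num [Matrix.map_apply]
      rw [hm, ← RingHom.mapMatrix_apply, ← RingHom.map_det,
        show (Matrix.of (![![1,-1,1,1,-1],![-1,1,-1,1,1],![1,-1,1,-1,1],![1,1,-1,1,-1],![-1,1,1,-1,1]] : Fin 5 → Fin 5 → ℤ)).det = 16 from by decide]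
      simpa using h16
end
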